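/- arXiv:1110.0855 — 9 statements merged into one kernel-verified Lean document; each statement's English description precedes it below -/
import Mathlib

section
/- Let f : ℝⁿ × ℝ → ℝⁿ and c > 0 be such that for almost every t ≥ t₀ and all a, b ∈ ℝⁿ, ⟨f(a,t) − f(b,t), a − b⟩ ≤ −c‖a − b‖². Let x, y : [t₀, ∞) → ℝⁿ be two Caratheodory solutions of ż = f(z,t). Then for all t ≥ t₀, ‖x(t) − y(t)‖ ≤ e^{−c(t−t₀)} ‖x(t₀) − y(t₀)‖; in particular x(t) − y(t) → 0 exponentially as t → ∞. -/
open scoped RealInnerProductSpace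
open MeasureTheory

noncomputable section

/-- A Caratheodory solution of `ż = g(t, z)` on `[t₀, ∞)`: a (locally
absolutely) continuous function satisfying the integral equation
`z t = z t₀ + ∫_{t₀}^t g(τ, z τ) dτ`. -/
def IsCaratheodorySol {E : Type*} [NormedAddCommGroup E] [NormedSpace ℝ E]
    (g : ℝ → E → E) (t₀ : ℝ) (z : ℝ → E) : Prop :=
  ContinuousOn z (Set.Ici t₀) ∧
  ∀ t, t₀ ≤ t →
    IntervalIntegrable (fun τ => g τ (z τ)) volume t₀ t ∧
    z t = z t₀ + ∫ τ in t₀..t, g τ (z τ)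

lemma energy_aux {E : Type*} [NormedAddCommGroup E] [InnerProductSpace ℝ E] [CompleteSpace E]
    {g : ℝ → E} {s t : ℝ} (hg : IntegrableOn g (Set.Ioc s t)) :
    ‖∫ τ in Set.Ioc s t, g τ‖ ^ 2
      = 2 * ∫ σ in Set.Ioc s t, ⟪g σ, ∫ τ in Set.Ioc σ t, g τ⟫ := by
  set ν := volume.restrict (Set.Ioc s t) with hν
  have hgi : Integrable g ν := hg
  set K : ℝ × ℝ → ℝ := fun p => ⟪g p.1, g p.2⟫ with hK
  have hKm : AEStronglyMeasurable K (ν.prod ν) :=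
    (hgi.aestronglyMeasurable.comp_fst).inner (𝕜 := ℝ) (hgi.aestronglyMeasurable.comp_snd)
  have hKi : Integrable K (ν.prod ν) := by
    refine (hgi.norm.mul_prod hgi.norm).mono' hKm ?_
    filter_upwards with p
    simpa using norm_inner_le_norm (𝕜 := ℝ) (g p.1) (g p.2)
  set T₁ : Set (ℝ × ℝ) := {p | p.1 < p.2} with hT1def
  set T₂ : Set (ℝ × ℝ) := {p | p.2 < p.1} with hT2def
  have hT₁ : MeasurableSet T₁ := measurableSet_lt measurable_fst measurable_snd
  have hT₂ : MeasurableSet T₂ := measurableSet_lt measurable_snd measurable_fst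
  -- diagonal is null
  have hdiag : (ν.prod ν) {p : ℝ × ℝ | p.1 = p.2} = 0 := by
    have hD : MeasurableSet {p : ℝ × ℝ | p.1 = p.2} :=
      measurableSet_eq_fun measurable_fst measurable_snd
    rw [Measure.prod_apply hD]
    have : ∀ x : ℝ, ν (Prod.mk x ⁻¹' {p : ℝ × ℝ | p.1 = p.2}) = 0 := by
      intro x
      have : (Prod.mk x ⁻¹' {p : ℝ × ℝ | p.1 = p.2}) = {x} := by
        ext y; simp [eq_comm]
      rw [this]
      refine le_antisymm ?_ (zero_le)
      calc ν {x} ≤ volume {x} := Measure.restrict_le_self _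
        _ = 0 := Real.volume_singleton
    simp [this]
  -- whole integral = T₁ + T₂
  have hsplit : ∫ p, K p ∂(ν.prod ν)
      = (∫ p in T₁, K p ∂(ν.prod ν)) + ∫ p in T₂, K p ∂(ν.prod ν) := by
    have huniv : (Set.univ : Set (ℝ × ℝ)) =ᵐ[ν.prod ν] ((T₁ ∪ T₂ : Set (ℝ × ℝ))) := by
      rw [MeasureTheory.ae_eq_set]
      constructor
      · refine measure_mono_null ?_ hdiag
        intro p hp
        simp only [Set.mem_diff, Set.mem_union, hT1def, hT2def, Set.mem_setOf_eq] at hp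
        have := hp.2
        push_neg at this
        exact le_antisymm this.2 this.1
      · simp
    have hdisj : Disjoint T₁ T₂ := by
      rw [Set.disjoint_left]
      intro p hp1 hp2
      simp only [hT1def, hT2def, Set.mem_setOf_eq] at hp1 hp2
      linarith
    rw [← setIntegral_univ (μ := ν.prod ν) (f := K), setIntegral_congr_set huniv,
      setIntegral_union hdisj hT₂ hKi.integrableOn hKi.integrableOn]
  -- T₂ integral equals T₁ integral by symmetry
  have hswap : (∫ p in T₂, K p ∂(ν.prod ν)) = ∫ p in T₁, K p ∂(ν.prod ν) := by
    have hmp : MeasurePreserving Prod.swap (ν.prod ν) (ν.prod ν) :=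
      Measure.measurePreserving_swap
    have h := hmp.setIntegral_preimage_emb
      (MeasurableEquiv.prodComm (α := ℝ) (β := ℝ)).measurableEmbedding K T₁
    have hpre : Prod.swap ⁻¹' T₁ = T₂ := by
      ext p; simp [hT1def, hT2def]
    have hcomp : (fun p : ℝ × ℝ => K (Prod.swap p)) = K := by
      funext p; simp [hK, real_inner_comm]
    rw [hpre] at h
    calc (∫ p in T₂, K p ∂(ν.prod ν))
        = ∫ p in T₂, K (Prod.swap p) ∂(ν.prod ν) := by rw [hcomp]
      _ = ∫ p in T₁, K p ∂(ν.prod ν) := h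
  -- T₁ integral as iterated integral
  have hT1val : (∫ p in T₁, K p ∂(ν.prod ν))
      = ∫ σ in Set.Ioc s t, ⟪g σ, ∫ τ in Set.Ioc σ t, g τ⟫ := by
    rw [← integral_indicator hT₁]
    rw [MeasureTheory.integral_prod _ (hKi.indicator hT₁)]
    have : ∀ σ, (∫ τ, T₁.indicator K (σ, τ) ∂ν)
        = ∫ τ in Set.Ioi σ, K (σ, τ) ∂ν := by
      intro σ
      have hfun : (fun τ => T₁.indicator K (σ, τ))
          = (Set.Ioi σ).indicator (fun τ => K (σ, τ)) := by
        funext τ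
        by_cases h : σ < τ
        · simp [Set.indicator_of_mem, h, hT1def, Set.indicator, Set.mem_Ioi]
        · simp [Set.indicator, h, hT1def, Set.mem_Ioi]
      rw [hfun, integral_indicator measurableSet_Ioi]
    simp_rw [this]
    rw [hν]
    refine setIntegral_congr_fun measurableSet_Ioc ?_
    intro σ hσ
    dsimp only
    have hrr : (volume.restrict (Set.Ioc s t)).restrict (Set.Ioi σ)
        = volume.restrict (Set.Ioc σ t) := by
      rw [Measure.restrict_restrict measurableSet_Ioi]
      congr 1
      ext τ
      simp only [Set.mem_inter_iff, Set.mem_Ioi, Set.mem_Ioc]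
      exact ⟨fun ⟨h1, _, h3⟩ => ⟨h1, h3⟩, fun ⟨h1, h2⟩ => ⟨h1, lt_trans hσ.1 h1, h2⟩⟩
    rw [hrr]
    exact integral_inner (hg.mono_set (Set.Ioc_subset_Ioc_left hσ.1.le)) (g σ)
  -- the left-hand side equals the full double integral
  have hLHS : ‖∫ τ in Set.Ioc s t, g τ‖ ^ 2 = ∫ p, K p ∂(ν.prod ν) := by
    rw [MeasureTheory.integral_prod _ hKi]
    have hinner : ∀ σ, (∫ τ, K (σ, τ) ∂ν) = ⟪g σ, ∫ τ, g τ ∂ν⟫ := fun σ =>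
      integral_inner hgi (g σ)
    simp_rw [hinner]
    rw [show (fun σ => ⟪g σ, ∫ τ, g τ ∂ν⟫) = fun σ => ⟪(∫ τ, g τ ∂ν), g σ⟫ from
      funext fun σ => real_inner_comm _ _]
    rw [integral_inner hgi, real_inner_self_eq_norm_sq]
  rw [hLHS, hsplit, hswap, hT1val]
  ring

lemma key_step {E : Type*} [NormedAddCommGroup E] [InnerProductSpace ℝ E] [CompleteSpace E]
    {g v : ℝ → E} {c t₀ : ℝ}
    (hv : ContinuousOn v (Set.Ici t₀))
    (hg : ∀ s t, t₀ ≤ s → s ≤ t → IntegrableOn g (Set.Ioc s t))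
    (hint : ∀ s t, t₀ ≤ s → s ≤ t → v t - v s = ∫ τ in Set.Ioc s t, g τ)
    (hb : ∀ᵐ τ ∂(volume : Measure ℝ), t₀ ≤ τ → ⟪g τ, v τ⟫ ≤ -c * ‖v τ‖ ^ 2)
    {s t : ℝ} (hs : t₀ ≤ s) (hst : s ≤ t) :
    ‖v t‖ ^ 2 ≤ ‖v s‖ ^ 2 - 2 * c * ∫ τ in Set.Ioc s t, ‖v τ‖ ^ 2 := by
  have hgν : IntegrableOn g (Set.Ioc s t) := hg s t hs hst
  set D : E := ∫ τ in Set.Ioc s t, g τ with hDdef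
  have hD : v t - v s = D := hint s t hs hst
  set F : ℝ → E := fun τ => ∫ u in Set.Ioc τ t, g u with hFdef
  -- F τ = D - ∫_{Ioc s τ} g  on Icc s t
  have hFeq : ∀ τ ∈ Set.Icc s t, F τ = D - ∫ u in Set.Ioc s τ, g u := by
    intro τ hτ
    have hsplit : (∫ u in Set.Ioc s τ, g u) + ∫ u in Set.Ioc τ t, g u = D := by
      rw [hDdef, ← Set.Ioc_union_Ioc_eq_Ioc hτ.1 hτ.2,
        setIntegral_union (Set.Ioc_disjoint_Ioc_of_le le_rfl) measurableSet_Ioc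
          (hgν.mono_set (by rw [← Set.Ioc_union_Ioc_eq_Ioc hτ.1 hτ.2]; exact Set.subset_union_left))
          (hgν.mono_set (by rw [← Set.Ioc_union_Ioc_eq_Ioc hτ.1 hτ.2]; exact Set.subset_union_right))]
    rw [hFdef]
    dsimp only
    rw [← hsplit]
    abel
  have hIcc : IntegrableOn g (Set.Icc s t) := (integrableOn_Icc_iff_integrableOn_Ioc enorm_ne_top).2 hgν
  have hPcont : ContinuousOn (fun τ => ∫ u in Set.Ioc s τ, g u) (Set.Icc s t) :=
    intervalIntegral.continuousOn_primitive hIcc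
  have hFcont : ContinuousOn F (Set.Icc s t) :=
    (continuousOn_const.sub hPcont).congr hFeq
  have hFaesm : AEStronglyMeasurable F (volume.restrict (Set.Ioc s t)) :=
    (hFcont.mono Set.Ioc_subset_Icc_self).aestronglyMeasurable measurableSet_Ioc
  set B : ℝ := ∫ u in Set.Ioc s t, ‖g u‖ with hBdef
  have hFB : ∀ τ ∈ Set.Ioc s t, ‖F τ‖ ≤ B := by
    intro τ hτ
    calc ‖F τ‖ ≤ ∫ u in Set.Ioc τ t, ‖g u‖ := norm_integral_le_integral_norm _
      _ ≤ B := by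
        refine setIntegral_mono_set hgν.norm ?_ ?_
        · filter_upwards with u using norm_nonneg _
        · exact (Set.Ioc_subset_Ioc_left hτ.1.le).eventuallyLE
  have h1 : Integrable (fun τ => (⟪g τ, v t⟫ : ℝ)) (volume.restrict (Set.Ioc s t)) :=
    hgν.inner_const (v t)
  have h2 : Integrable (fun τ => (⟪g τ, F τ⟫ : ℝ)) (volume.restrict (Set.Ioc s t)) := by
    refine (hgν.norm.mul_const B).mono' (hgν.aestronglyMeasurable.inner hFaesm) ?_
    filter_upwards [ae_restrict_mem measurableSet_Ioc] with τ hτ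
    calc ‖(⟪g τ, F τ⟫ : ℝ)‖ ≤ ‖g τ‖ * ‖F τ‖ := norm_inner_le_norm _ _
      _ ≤ ‖g τ‖ * B := by
          exact mul_le_mul_of_nonneg_left (hFB τ hτ) (norm_nonneg _)
  -- the crucial identity
  have hsplitInner : (∫ τ in Set.Ioc s t, (⟪g τ, v τ⟫ : ℝ))
      = (∫ τ in Set.Ioc s t, (⟪g τ, v t⟫ : ℝ)) - ∫ τ in Set.Ioc s t, (⟪g τ, F τ⟫ : ℝ) := by
    rw [← integral_sub h1 h2]
    refine setIntegral_congr_fun measurableSet_Ioc ?_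
    intro τ hτ
    have hvτ : v τ = v t - F τ := by
      have := hint τ t (hs.trans hτ.1.le) hτ.2
      rw [hFdef]
      dsimp only
      rw [← this]
      abel
    show (⟪g τ, v τ⟫ : ℝ) = (⟪g τ, v t⟫ : ℝ) - (⟪g τ, F τ⟫ : ℝ)
    rw [hvτ, inner_sub_right]
  have hfirst : (∫ τ in Set.Ioc s t, (⟪g τ, v t⟫ : ℝ)) = ⟪v t, D⟫ := by
    have : (fun τ => (⟪g τ, v t⟫ : ℝ)) = fun τ => (⟪v t, g τ⟫ : ℝ) :=
      funext fun τ => real_inner_comm _ _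
    rw [this, integral_inner hgν (v t)]
  have henergy : ‖D‖ ^ 2 = 2 * ∫ τ in Set.Ioc s t, (⟪g τ, F τ⟫ : ℝ) := energy_aux hgν
  have hvs : v s = v t - D := by rw [← hD]; abel
  have hnorm : ‖v s‖ ^ 2 = ‖v t‖ ^ 2 - 2 * ⟪v t, D⟫ + ‖D‖ ^ 2 := by
    rw [hvs]; exact norm_sub_sq_real _ _
  have hident : ‖v t‖ ^ 2 = ‖v s‖ ^ 2 + 2 * ∫ τ in Set.Ioc s t, (⟪g τ, v τ⟫ : ℝ) := by
    rw [hsplitInner, hfirst]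
    linarith
  -- bound the integral
  have hφint : IntegrableOn (fun τ => ‖v τ‖ ^ 2) (Set.Ioc s t) := by
    have hsub : Set.Icc s t ⊆ Set.Ici t₀ := fun u hu => le_trans hs hu.1
    exact (((hv.mono hsub).norm.pow 2).integrableOn_Icc).mono_set Set.Ioc_subset_Icc_self
  have hintmono : (∫ τ in Set.Ioc s t, (⟪g τ, v τ⟫ : ℝ))
      ≤ ∫ τ in Set.Ioc s t, -c * ‖v τ‖ ^ 2 := by
    refine integral_mono_ae ?_ (hφint.const_mul _) ?_
    · refine (h1.sub h2).congr ?_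
      filter_upwards [ae_restrict_mem measurableSet_Ioc] with τ hτ
      have hvτ : v τ = v t - F τ := by
        have := hint τ t (hs.trans hτ.1.le) hτ.2
        rw [hFdef]; dsimp only; rw [← this]; abel
      simp only [Pi.sub_apply]
      rw [hvτ, inner_sub_right]
    · filter_upwards [ae_restrict_of_ae hb, ae_restrict_mem measurableSet_Ioc] with τ h hτ
      exact h (hs.trans hτ.1.le)
  have : (∫ τ in Set.Ioc s t, -c * ‖v τ‖ ^ 2) = -c * ∫ τ in Set.Ioc s t, ‖v τ‖ ^ 2 :=
    integral_const_mul _ _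
  rw [hident]
  rw [this] at hintmono
  linarith


/-- If `f` is one-sided Lipschitz with constant `-c < 0` for almost every
`t ≥ t₀`, then any two Caratheodory solutions of `ż = f(z, t)` converge
exponentially towards each other with rate `c`; in particular their difference
tends to `0`. -/
theorem contraction_of_one_sided_lipschitz
    {n : ℕ}
    (f : EuclideanSpace ℝ (Fin n) → ℝ → EuclideanSpace ℝ (Fin n))
    (t₀ c : ℝ) (hc : 0 < c)
    (hosl : ∀ᵐ t ∂(volume : Measure ℝ), t₀ ≤ t →
      ∀ a b : EuclideanSpace ℝ (Fin n),
        ⟪f a t - f b t, a - b⟫ ≤ -c * ‖a - b‖ ^ 2)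
    (x y : ℝ → EuclideanSpace ℝ (Fin n))
    (hx : IsCaratheodorySol (fun t z => f z t) t₀ x)
    (hy : IsCaratheodorySol (fun t z => f z t) t₀ y) :
    (∀ t, t₀ ≤ t → ‖x t - y t‖ ≤ Real.exp (-c * (t - t₀)) * ‖x t₀ - y t₀‖) ∧
    Filter.Tendsto (fun t => x t - y t) Filter.atTop (nhds 0) := by
  set v : ℝ → EuclideanSpace ℝ (Fin n) := fun τ => x τ - y τ with hvdef
  set g : ℝ → EuclideanSpace ℝ (Fin n) := fun τ => f (x τ) τ - f (y τ) τ with hgdef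
  have hvcont : ContinuousOn v (Set.Ici t₀) := hx.1.sub hy.1
  have hxi : ∀ {s t : ℝ}, t₀ ≤ s → s ≤ t →
      IntervalIntegrable (fun τ => f (x τ) τ) volume s t := fun {s t} hs hst =>
    ((hx.2 s hs).1).symm.trans ((hx.2 t (hs.trans hst)).1)
  have hyi : ∀ {s t : ℝ}, t₀ ≤ s → s ≤ t →
      IntervalIntegrable (fun τ => f (y τ) τ) volume s t := fun {s t} hs hst =>
    ((hy.2 s hs).1).symm.trans ((hy.2 t (hs.trans hst)).1)
  have hgint : ∀ s t, t₀ ≤ s → s ≤ t → IntegrableOn g (Set.Ioc s t) := by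
    intro s t hs hst
    exact ((hxi hs hst).sub (hyi hs hst)).1
  have hvint : ∀ s t, t₀ ≤ s → s ≤ t → v t - v s = ∫ τ in Set.Ioc s t, g τ := by
    intro s t hs hst
    have hxeq : x t - x s = ∫ τ in s..t, f (x τ) τ := by
      rw [(hx.2 t (hs.trans hst)).2, (hx.2 s hs).2,
        ← intervalIntegral.integral_interval_sub_left (hx.2 t (hs.trans hst)).1 (hx.2 s hs).1]
      abel
    have hyeq : y t - y s = ∫ τ in s..t, f (y τ) τ := by
      rw [(hy.2 t (hs.trans hst)).2, (hy.2 s hs).2,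
        ← intervalIntegral.integral_interval_sub_left (hy.2 t (hs.trans hst)).1 (hy.2 s hs).1]
      abel
    have : v t - v s = (x t - x s) - (y t - y s) := by
      rw [hvdef]; dsimp only; abel
    rw [this, hxeq, hyeq, ← intervalIntegral.integral_sub (hxi hs hst) (hyi hs hst),
      intervalIntegral.integral_of_le hst]
  have hbb : ∀ᵐ τ ∂(volume : Measure ℝ), t₀ ≤ τ → ⟪g τ, v τ⟫ ≤ -c * ‖v τ‖ ^ 2 := by
    filter_upwards [hosl] with τ h hτ
    exact h hτ (x τ) (y τ)
  have hφint : ∀ s t, t₀ ≤ s → s ≤ t → IntegrableOn (fun τ => ‖v τ‖ ^ 2) (Set.Ioc s t) := by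
    intro s t hs hst
    have hsub : Set.Icc s t ⊆ Set.Ici t₀ := fun u hu => le_trans hs hu.1
    exact (((hvcont.mono hsub).norm.pow 2).integrableOn_Icc).mono_set Set.Ioc_subset_Icc_self
  have hmono : ∀ s t, t₀ ≤ s → s ≤ t → ‖v t‖ ^ 2 ≤ ‖v s‖ ^ 2 := by
    intro s t hs hst
    have hk := key_step hvcont hgint hvint hbb hs hst
    have hnn : 0 ≤ ∫ τ in Set.Ioc s t, ‖v τ‖ ^ 2 :=
      setIntegral_nonneg measurableSet_Ioc (fun τ _ => sq_nonneg _)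
    nlinarith
  have hstep : ∀ s t, t₀ ≤ s → s ≤ t → (1 + 2 * c * (t - s)) * ‖v t‖ ^ 2 ≤ ‖v s‖ ^ 2 := by
    intro s t hs hst
    have hk := key_step hvcont hgint hvint hbb hs hst
    have hlow : (t - s) * ‖v t‖ ^ 2 ≤ ∫ τ in Set.Ioc s t, ‖v τ‖ ^ 2 := by
      have hconst : (∫ _ in Set.Ioc s t, ‖v t‖ ^ 2) = (t - s) * ‖v t‖ ^ 2 := by
        rw [setIntegral_const, Real.volume_real_Ioc_of_le hst,
          smul_eq_mul]
      rw [← hconst]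
      refine setIntegral_mono_on (integrableOn_const measure_Ioc_lt_top.ne)
        (hφint s t hs hst) measurableSet_Ioc ?_
      intro τ hτ
      exact hmono τ t (hs.trans hτ.1.le) hτ.2
    nlinarith
  have hiter : ∀ (N : ℕ) (s δ : ℝ), t₀ ≤ s → 0 ≤ δ →
      (1 + 2 * c * δ) ^ N * ‖v (s + N * δ)‖ ^ 2 ≤ ‖v s‖ ^ 2 := by
    intro N
    induction N with
    | zero => intro s δ hs hδ; simp
    | succ N ih =>
      intro s δ hs hδ
      have hNδ : 0 ≤ (N : ℝ) * δ := mul_nonneg (Nat.cast_nonneg N) hδ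
      have h1 : t₀ ≤ s + N * δ := by linarith
      have h2 := hstep (s + N * δ) (s + N * δ + δ) h1 (by linarith)
      have heq : s + N * δ + δ - (s + N * δ) = δ := by ring
      rw [heq] at h2
      have h3 : s + (↑(N + 1)) * δ = s + ↑N * δ + δ := by push_cast; ring
      rw [h3, pow_succ]
      calc (1 + 2 * c * δ) ^ N * (1 + 2 * c * δ) * ‖v (s + ↑N * δ + δ)‖ ^ 2
          = (1 + 2 * c * δ) ^ N * ((1 + 2 * c * δ) * ‖v (s + ↑N * δ + δ)‖ ^ 2) := by ring
        _ ≤ (1 + 2 * c * δ) ^ N * ‖v (s + ↑N * δ)‖ ^ 2 :=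
            mul_le_mul_of_nonneg_left h2 (pow_nonneg (by nlinarith) N)
        _ ≤ ‖v s‖ ^ 2 := ih s δ hs hδ
  have hsq : ∀ t, t₀ ≤ t → ‖v t‖ ^ 2 ≤ Real.exp (-(2 * c * (t - t₀))) * ‖v t₀‖ ^ 2 := by
    intro t ht
    have hΔ0 : 0 ≤ t - t₀ := by linarith
    have key : ∀ N : ℕ, 1 ≤ N → (1 + (2 * c * (t - t₀)) / N) ^ N * ‖v t‖ ^ 2 ≤ ‖v t₀‖ ^ 2 := by
      intro N hN
      have hNpos : (0 : ℝ) < N := by exact_mod_cast hN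
      have hδ : 0 ≤ (t - t₀) / N := div_nonneg hΔ0 hNpos.le
      have h := hiter N t₀ ((t - t₀) / N) le_rfl hδ
      have hNt : t₀ + ↑N * ((t - t₀) / N) = t := by field_simp; ring
      rw [hNt] at h
      have harg : 2 * c * ((t - t₀) / N) = (2 * c * (t - t₀)) / N := by ring
      rw [harg] at h
      exact h
    have htend : Filter.Tendsto
        (fun N : ℕ => (1 + (2 * c * (t - t₀)) / N) ^ N * ‖v t‖ ^ 2) Filter.atTop
        (nhds (Real.exp (2 * c * (t - t₀)) * ‖v t‖ ^ 2)) :=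
      (Real.tendsto_one_add_div_pow_exp (2 * c * (t - t₀))).mul_const _
    have hle : Real.exp (2 * c * (t - t₀)) * ‖v t‖ ^ 2 ≤ ‖v t₀‖ ^ 2 :=
      le_of_tendsto htend (Filter.eventually_atTop.2 ⟨1, fun N hN => key N hN⟩)
    calc ‖v t‖ ^ 2
        = Real.exp (-(2 * c * (t - t₀))) * (Real.exp (2 * c * (t - t₀)) * ‖v t‖ ^ 2) := by
          rw [← mul_assoc, ← Real.exp_add]; simp
      _ ≤ Real.exp (-(2 * c * (t - t₀))) * ‖v t₀‖ ^ 2 :=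
          mul_le_mul_of_nonneg_left hle (Real.exp_nonneg _)
  have hnormbd : ∀ t, t₀ ≤ t → ‖v t‖ ≤ Real.exp (-c * (t - t₀)) * ‖v t₀‖ := by
    intro t ht
    refine le_of_pow_le_pow_left₀ two_ne_zero
      (mul_nonneg (Real.exp_nonneg _) (norm_nonneg _)) ?_
    calc ‖v t‖ ^ 2 ≤ Real.exp (-(2 * c * (t - t₀))) * ‖v t₀‖ ^ 2 := hsq t ht
      _ = (Real.exp (-c * (t - t₀)) * ‖v t₀‖) ^ 2 := by
          have h2 : (-c * (t - t₀)) + (-c * (t - t₀)) = -(2 * c * (t - t₀)) := by ring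
          conv_rhs => rw [mul_pow, pow_two, ← Real.exp_add, h2]
  refine ⟨fun t ht => hnormbd t ht, ?_⟩
  have hg0 : Filter.Tendsto (fun t => Real.exp (-c * (t - t₀)) * ‖v t₀‖)
      Filter.atTop (nhds 0) := by
    have h1 : Filter.Tendsto (fun t : ℝ => t - t₀) Filter.atTop Filter.atTop := by
      simpa [sub_eq_add_neg] using Filter.tendsto_atTop_add_const_right Filter.atTop (-t₀)
        Filter.tendsto_id
    have h2 : Filter.Tendsto (fun t : ℝ => -c * (t - t₀)) Filter.atTop Filter.atBot :=
      (Filter.tendsto_const_mul_atBot_of_neg (by linarith)).2 h1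
    have h3 : Filter.Tendsto (fun t : ℝ => Real.exp (-c * (t - t₀))) Filter.atTop (nhds 0) :=
      Real.tendsto_exp_atBot.comp h2
    simpa using h3.mul_const (‖v t₀‖)
  refine squeeze_zero_norm' ?_ hg0
  filter_upwards [Filter.eventually_ge_atTop t₀] with t ht using hnormbd t ht
end
end

section
/- (Contraction of piecewise-smooth continuous systems.) Let S₁, …, S_p be disjoint nonempty open subsets of ℝⁿ whose closures cover ℝⁿ, and let f : ℝⁿ × [t₀, ∞) → ℝⁿ be a continuous function such that f(x,t) = F_i(x,t) for x ∈ S_i, where each F_i is continuously differentiable in x on an open neighborhood of the closure of S_i. Suppose there are constants c_i > 0 with ⟨D_x F_i(x,t) v, v⟩ ≤ −c_i‖v‖² for every x in the closure of S_i, every v ∈ ℝⁿ and every t ≥ t₀, and set c := min_i c_i. Let C ⊆ ℝⁿ be a K-reachable set and let x, y be two Caratheodory solutions of ż = f(z,t) with x(s), y(s) ∈ C for all s ∈ [t₀, t]. Then ‖x(t) − y(t)‖ ≤ K e^{−c(t−t₀)} ‖x(t₀) − y(t₀)‖. -/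
open scoped RealInnerProductSpace
open MeasureTheory Set Filter Topology

noncomputable section

/-- One-sided Lipschitz estimate for a continuous piecewise-C¹ field. -/
theorem pw_onesided
    {n p : ℕ} (hp : 0 < p)
    (S : Fin p → Set (EuclideanSpace ℝ (Fin n)))
    (hcover : (⋃ i, closure (S i)) = Set.univ)
    (G : Fin p → EuclideanSpace ℝ (Fin n) → EuclideanSpace ℝ (Fin n))
    (g : EuclideanSpace ℝ (Fin n) → EuclideanSpace ℝ (Fin n))
    (hg_cont : Continuous g)
    (U : Fin p → Set (EuclideanSpace ℝ (Fin n)))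
    (hUopen : ∀ i, IsOpen (U i)) (hUsub : ∀ i, closure (S i) ⊆ U i)
    (hUdiff : ∀ i, ContDiffOn ℝ 1 (G i) (U i))
    (hmatch : ∀ i, ∀ z ∈ closure (S i), g z = G i z)
    (M : ℝ)
    (hbound : ∀ i, ∀ z ∈ closure (S i), ∀ u : EuclideanSpace ℝ (Fin n),
      ⟪fderiv ℝ (G i) z u, u⟫ ≤ M * ‖u‖ ^ 2)
    (a b : EuclideanSpace ℝ (Fin n)) :
    ⟪g a - g b, a - b⟫ ≤ M * ‖a - b‖ ^ 2 := by
  set u := a - b with hu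
  set γ : ℝ → EuclideanSpace ℝ (Fin n) := fun r => b + r • u with hγdef
  have hγcont : Continuous γ := continuous_const.add (continuous_id.smul continuous_const)
  have hγderiv : ∀ r : ℝ, HasDerivAt γ u r := by
    intro r
    have h1 : HasDerivAt (fun s : ℝ => s • u) ((1:ℝ) • u) r :=
      (hasDerivAt_id r).smul_const u
    simpa [hγdef] using h1.const_add b
  set φ : ℝ → ℝ := fun r => ⟪u, g (γ r)⟫ with hφdef
  set ψ : Fin p → ℝ → ℝ := fun i r => ⟪u, G i (γ r)⟫ with hψdef
  set D : Fin p → ℝ → ℝ := fun i r => ⟪u, fderiv ℝ (G i) (γ r) u⟫ with hDdef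
  set MM := M * ‖u‖ ^ 2 with hMM
  -- the closed pieces in parameter space
  set A : Fin p → Set ℝ := fun i => γ ⁻¹' (closure (S i)) with hAdef
  have hAclosed : ∀ i, IsClosed (A i) := fun i => isClosed_closure.preimage hγcont
  have hAcover : ∀ r : ℝ, ∃ i, r ∈ A i := by
    intro r
    have : γ r ∈ ⋃ i, closure (S i) := by rw [hcover]; trivial
    simpa [hAdef] using this
  have hφψ : ∀ i, ∀ r ∈ A i, φ r = ψ i r := by
    intro i r hr
    simp only [hφdef, hψdef]
    rw [hmatch i _ hr]
  have hψderiv : ∀ i, ∀ r : ℝ, γ r ∈ U i → HasDerivAt (ψ i) (D i r) r := by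
    intro i r hrU
    have hdiff : DifferentiableAt ℝ (G i) (γ r) :=
      ((hUdiff i).differentiableOn one_ne_zero).differentiableAt
        ((hUopen i).mem_nhds hrU)
    have h1 : HasDerivAt (fun s => G i (γ s)) (fderiv ℝ (G i) (γ r) u) r :=
      hdiff.hasFDerivAt.comp_hasDerivAt r (hγderiv r)
    have h2 := (hasDerivAt_const r u).inner ℝ h1
    simpa [hψdef, hDdef] using h2
  have hDcont : ∀ i, ContinuousOn (D i) (γ ⁻¹' (U i)) := by
    intro i
    have h1 : ContinuousOn (fderiv ℝ (G i)) (U i) :=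
      (hUdiff i).continuousOn_fderiv_of_isOpen (hUopen i) le_rfl
    have h2 : ContinuousOn (fun r => fderiv ℝ (G i) (γ r)) (γ ⁻¹' (U i)) :=
      h1.comp hγcont.continuousOn (fun r hr => hr)
    have h3 : ContinuousOn (fun r => (fderiv ℝ (G i) (γ r)) u) (γ ⁻¹' (U i)) :=
      (ContinuousLinearMap.apply ℝ (EuclideanSpace ℝ (Fin n)) u).continuous.comp_continuousOn h2
    exact continuousOn_const.inner h3
  have hDbound : ∀ i, ∀ r ∈ A i, D i r ≤ MM := by
    intro i r hr
    have h1 := hbound i (γ r) hr u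
    show (⟪u, fderiv ℝ (G i) (γ r) u⟫:ℝ) ≤ MM
    rw [real_inner_comm]
    exact h1
  -- the main fencing estimate
  have main : ∀ ε > 0, φ 1 ≤ φ 0 + (MM + ε) * 1 := by
    intro ε hε
    have hφcont : Continuous φ := by
      exact (continuous_const.inner (hg_cont.comp hγcont))
    have bound : ∀ r ∈ Ico (0:ℝ) 1, ∀ q, MM + ε < q →
        ∃ᶠ z in 𝓝[>] r, slope φ r z < q := by
      intro r _ q hq
      -- find a good δ-neighborhood
      have hev : ∀ᶠ z in 𝓝 r, ∀ i,
          (r ∈ A i → (γ z ∈ U i ∧ D i z < MM + ε)) ∧ (r ∉ A i → z ∉ A i) := by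
        rw [eventually_all]
        intro i
        by_cases hri : r ∈ A i
        · have hOopen : IsOpen (γ ⁻¹' (U i) ∩ (D i) ⁻¹' (Iio (MM + ε))) :=
            (hDcont i).isOpen_inter_preimage ((hUopen i).preimage hγcont) isOpen_Iio
          have hrO : r ∈ γ ⁻¹' (U i) ∩ (D i) ⁻¹' (Iio (MM + ε)) := by
            refine ⟨hUsub i hri, ?_⟩
            exact lt_of_le_of_lt (hDbound i r hri) (by linarith)
          filter_upwards [hOopen.mem_nhds hrO] with z hz
          exact ⟨fun _ => ⟨hz.1, hz.2⟩, fun h => absurd hri h⟩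
        · have : (A i)ᶜ ∈ 𝓝 r := ((hAclosed i).isOpen_compl).mem_nhds hri
          filter_upwards [this] with z hz
          exact ⟨fun h => absurd h hri, fun _ => hz⟩
      obtain ⟨δ, hδpos, hδ⟩ := Metric.eventually_nhds_iff.mp hev
      have hIoo : Ioo r (r + δ) ∈ 𝓝[>] r := Ioo_mem_nhdsGT_of_mem ⟨le_rfl, by linarith⟩
      refine (Filter.eventually_iff_exists_mem.mpr ⟨_, hIoo, ?_⟩).frequently
      intro z hz
      obtain ⟨j, hzAj⟩ := hAcover z
      have hdz : dist z r < δ := by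
        rw [Real.dist_eq, abs_of_pos (by linarith [hz.1] : (0:ℝ) < z - r)]
        linarith [hz.2]
      have hrAj : r ∈ A j := by
        by_contra hrj
        exact ((hδ hdz j).2 hrj) hzAj
      -- on [r, z] we can use ψ j
      have hsub : ∀ ρ ∈ Icc r z, γ ρ ∈ U j ∧ D j ρ < MM + ε := by
        intro ρ hρ
        have : dist ρ r < δ := by
          rw [Real.dist_eq, abs_of_nonneg (by linarith [hρ.1])]
          linarith [hρ.2, hz.2]
        exact (hδ this j).1 hrAj
      have hrz : r < z := hz.1
      have hcont : ContinuousOn (ψ j) (Icc r z) := by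
        intro ρ hρ
        exact ((hψderiv j ρ (hsub ρ hρ).1).continuousAt).continuousWithinAt
      have hdiff : DifferentiableOn ℝ (ψ j) (Ioo r z) := by
        intro ρ hρ
        exact ((hψderiv j ρ (hsub ρ (Ioo_subset_Icc_self hρ)).1).differentiableAt).differentiableWithinAt
      obtain ⟨ξ, hξ, hslope⟩ := exists_deriv_eq_slope (ψ j) hrz hcont hdiff
      have hderξ : deriv (ψ j) ξ = D j ξ :=
        (hψderiv j ξ (hsub ξ (Ioo_subset_Icc_self hξ)).1).deriv
      have : slope φ r z = (ψ j z - ψ j r) / (z - r) := by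
        rw [slope_def_field, hφψ j r hrAj, hφψ j z hzAj]
      rw [this, ← hslope, hderξ]
      exact lt_trans (hsub ξ (Ioo_subset_Icc_self hξ)).2 hq
    have happ := image_le_of_liminf_slope_right_le_deriv_boundary
      (f := φ) (a := (0:ℝ)) (b := 1)
      (B := fun r => φ 0 + (MM + ε) * r) (B' := fun _ => MM + ε)
      hφcont.continuousOn (by simp)
      ((continuous_const.add (continuous_const.mul continuous_id)).continuousOn)
      (fun r _ => by
        have h := ((hasDerivWithinAt_id r (Ici r)).const_mul (MM + ε)).const_add (φ 0)
        simpa using h)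
      bound (right_mem_Icc.mpr zero_le_one)
    simpa using happ
  have hfin : φ 1 - φ 0 ≤ MM := by
    have h2 : ∀ ε > 0, φ 1 - φ 0 ≤ MM + ε := by
      intro ε hε
      have := main ε hε
      linarith
    exact le_of_forall_pos_le_add h2
  have hγ1 : γ 1 = a := by simp [hγdef, hu]
  have hγ0 : γ 0 = b := by simp [hγdef]
  calc ⟪g a - g b, u⟫ = φ 1 - φ 0 := by
        simp only [hφdef, hγ1, hγ0]
        rw [real_inner_comm, inner_sub_right]
      _ ≤ MM := hfin


/-- A set `C` is `K`-reachable if any two of its points can be joined by a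
continuously differentiable curve lying in `C` whose speed is bounded by
`K` times the distance between the endpoints. -/
def KReachable {E : Type*} [NormedAddCommGroup E] [NormedSpace ℝ E]
    (K : ℝ) (C : Set E) : Prop :=
  ∀ x₀ ∈ C, ∀ y₀ ∈ C, ∃ γ : ℝ → E,
    ContDiffOn ℝ 1 γ (Set.Icc 0 1) ∧
    (∀ r ∈ Set.Icc (0 : ℝ) 1, γ r ∈ C) ∧
    γ 0 = x₀ ∧ γ 1 = y₀ ∧
    ∀ r ∈ Set.Icc (0 : ℝ) 1, ‖derivWithin γ (Set.Icc 0 1) r‖ ≤ K * ‖y₀ - x₀‖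

/-- Contraction of piecewise-smooth continuous (PWSC) systems: a continuous
vector field defined by continuously differentiable pieces `F i` on disjoint
open regions `S i` whose closures cover the space; if each piece has Euclidean
matrix measure of its Jacobian bounded by `-(c i) < 0`, then any two
Caratheodory solutions remaining in a `K`-reachable set `C` converge towards
each other exponentially with rate `cm = min_i c i`. -/
theorem contraction_of_pwsc
    {n p : ℕ} (hp : 0 < p)
    (S : Fin p → Set (EuclideanSpace ℝ (Fin n)))
    (hopen : ∀ i, IsOpen (S i)) (hne : ∀ i, (S i).Nonempty)
    (hdisj : Pairwise fun i j => Disjoint (S i) (S j))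
    (hcover : (⋃ i, closure (S i)) = Set.univ)
    (t₀ : ℝ)
    (F : Fin p → EuclideanSpace ℝ (Fin n) → ℝ → EuclideanSpace ℝ (Fin n))
    (f : EuclideanSpace ℝ (Fin n) → ℝ → EuclideanSpace ℝ (Fin n))
    (hf_cont : Continuous fun pr : EuclideanSpace ℝ (Fin n) × ℝ => f pr.1 pr.2)
    (hmatch : ∀ i, ∀ x ∈ S i, ∀ t, t₀ ≤ t → f x t = F i x t)
    (hF : ∀ i, ∃ U : Set (EuclideanSpace ℝ (Fin n)), IsOpen U ∧ closure (S i) ⊆ U ∧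
      ∀ t, t₀ ≤ t → ContDiffOn ℝ 1 (fun x => F i x t) U)
    (c : Fin p → ℝ) (hc : ∀ i, 0 < c i)
    (hμ : ∀ i, ∀ x ∈ closure (S i), ∀ t, t₀ ≤ t → ∀ v : EuclideanSpace ℝ (Fin n),
      ⟪fderiv ℝ (fun z => F i z t) x v, v⟫ ≤ -(c i) * ‖v‖ ^ 2)
    (cm : ℝ) (hcm : IsGLB (Set.range c) cm)
    (C : Set (EuclideanSpace ℝ (Fin n))) (K : ℝ) (hK : 0 < K)
    (hC : KReachable K C)
    (x y : ℝ → EuclideanSpace ℝ (Fin n))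
    (hx : IsCaratheodorySol (fun t z => f z t) t₀ x)
    (hy : IsCaratheodorySol (fun t z => f z t) t₀ y)
    (t : ℝ) (ht : t₀ ≤ t)
    (hxC : ∀ s ∈ Set.Icc t₀ t, x s ∈ C)
    (hyC : ∀ s ∈ Set.Icc t₀ t, y s ∈ C) :
    ‖x t - y t‖ ≤ K * Real.exp (-cm * (t - t₀)) * ‖x t₀ - y t₀‖ := by
  obtain ⟨hxcont, hxint⟩ := hx
  obtain ⟨hycont, hyint⟩ := hy
  choose U hUopen hUsub hUdiff using hF
  have hcm_le : ∀ i, cm ≤ c i := fun i => hcm.1 ⟨i, rfl⟩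
  -- f agrees with F i on the closure of S i
  have hmatch' : ∀ s, t₀ ≤ s → ∀ i, ∀ z ∈ closure (S i), f z s = F i z s := by
    intro s hs i z hz
    have hnb : (𝓝[S i] z).NeBot := mem_closure_iff_nhdsWithin_neBot.mp hz
    have h1 : Tendsto (fun w => f w s) (𝓝[S i] z) (𝓝 (f z s)) :=
      ((hf_cont.comp (continuous_id.prodMk continuous_const)).tendsto z).mono_left
        nhdsWithin_le_nhds
    have h2 : Tendsto (fun w => F i w s) (𝓝[S i] z) (𝓝 (F i z s)) :=
      (((hUdiff i s hs).continuousOn.continuousAt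
        ((hUopen i).mem_nhds (hUsub i hz)))).tendsto.mono_left nhdsWithin_le_nhds
    have heq : (fun w => f w s) =ᶠ[𝓝[S i] z] (fun w => F i w s) :=
      eventually_nhdsWithin_of_forall (fun w hw => hmatch i w hw s hs)
    exact tendsto_nhds_unique (h1.congr' heq) h2
  -- one-sided Lipschitz estimate for f
  have key : ∀ s, t₀ ≤ s → ∀ a b : EuclideanSpace ℝ (Fin n),
      ⟪f a s - f b s, a - b⟫ ≤ -cm * ‖a - b‖ ^ 2 := by
    intro s hs a b
    refine pw_onesided hp S hcover (fun i z => F i z s) (fun z => f z s)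
      (hf_cont.comp (continuous_id.prodMk continuous_const)) U hUopen hUsub
      (fun i => hUdiff i s hs) (fun i z hz => hmatch' s hs i z hz) (-cm) ?_ a b
    intro i z hz u
    have h1 := hμ i z hz s hs u
    have h2 : -(c i) * ‖u‖ ^ 2 ≤ -cm * ‖u‖ ^ 2 :=
      mul_le_mul_of_nonneg_right (neg_le_neg (hcm_le i)) (sq_nonneg _)
    exact le_trans h1 h2
  -- solutions are differentiable on the interior
  have hhx : ContinuousOn (fun τ => f (x τ) τ) (Ioi t₀) :=
    hf_cont.comp_continuousOn
      (((hxcont.mono Ioi_subset_Ici_self)).prodMk (continuousOn_id))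
  have hhy : ContinuousOn (fun τ => f (y τ) τ) (Ioi t₀) :=
    hf_cont.comp_continuousOn
      (((hycont.mono Ioi_subset_Ici_self)).prodMk (continuousOn_id))
  have hxD : ∀ s ∈ Ioo t₀ t, HasDerivAt x (f (x s) s) s := by
    intro s hs
    have hint : IntervalIntegrable (fun τ => f (x τ) τ) volume t₀ s := (hxint s hs.1.le).1
    have hmeas := ContinuousOn.stronglyMeasurableAtFilter (μ := volume) isOpen_Ioi hhx s hs.1
    have hca : ContinuousAt (fun τ => f (x τ) τ) s :=
      (hhx s hs.1).continuousAt (isOpen_Ioi.mem_nhds hs.1)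
    have hG := (intervalIntegral.integral_hasDerivAt_right hint hmeas hca).const_add (x t₀)
    refine hG.congr_of_eventuallyEq ?_
    filter_upwards [isOpen_Ioi.mem_nhds hs.1] with σ hσ
    exact (hxint σ (le_of_lt hσ)).2
  have hyD : ∀ s ∈ Ioo t₀ t, HasDerivAt y (f (y s) s) s := by
    intro s hs
    have hint : IntervalIntegrable (fun τ => f (y τ) τ) volume t₀ s := (hyint s hs.1.le).1
    have hmeas := ContinuousOn.stronglyMeasurableAtFilter (μ := volume) isOpen_Ioi hhy s hs.1
    have hca : ContinuousAt (fun τ => f (y τ) τ) s :=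
      (hhy s hs.1).continuousAt (isOpen_Ioi.mem_nhds hs.1)
    have hG := (intervalIntegral.integral_hasDerivAt_right hint hmeas hca).const_add (y t₀)
    refine hG.congr_of_eventuallyEq ?_
    filter_upwards [isOpen_Ioi.mem_nhds hs.1] with σ hσ
    exact (hyint σ (le_of_lt hσ)).2
  -- Lyapunov-type function
  set w : ℝ → EuclideanSpace ℝ (Fin n) := fun σ => x σ - y σ with hwdef
  set ψ : ℝ → ℝ := fun σ => Real.exp (2 * cm * (σ - t₀)) * ⟪w σ, w σ⟫ with hψdef
  have hψD : ∀ s ∈ Ioo t₀ t, HasDerivAt ψ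
      (2 * cm * Real.exp (2 * cm * (s - t₀)) * ⟪w s, w s⟫ +
        Real.exp (2 * cm * (s - t₀)) *
          (⟪w s, f (x s) s - f (y s) s⟫ + ⟪f (x s) s - f (y s) s, w s⟫)) s := by
    intro s hs
    have hw : HasDerivAt w (f (x s) s - f (y s) s) s := (hxD s hs).sub (hyD s hs)
    have hinner := hw.inner ℝ hw
    have hexp : HasDerivAt (fun σ => Real.exp (2 * cm * (σ - t₀)))
        (Real.exp (2 * cm * (s - t₀)) * (2 * cm)) s := by
      have h0 : HasDerivAt (fun σ : ℝ => 2 * cm * (σ - t₀)) (2 * cm) s := by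
        simpa using ((hasDerivAt_id s).sub_const t₀).const_mul (2 * cm)
      exact h0.exp
    have := hexp.mul hinner
    refine HasDerivAt.congr_deriv this ?_
    ring
  have hψderiv_nonpos : ∀ s ∈ Ioo t₀ t, deriv ψ s ≤ 0 := by
    intro s hs
    rw [(hψD s hs).deriv]
    have hI2 : ⟪f (x s) s - f (y s) s, w s⟫ ≤ -cm * ‖w s‖ ^ 2 := key s hs.1.le (x s) (y s)
    have hI1 : ⟪w s, w s⟫ = ‖w s‖ ^ 2 := real_inner_self_eq_norm_sq _
    have hcomm : ⟪w s, f (x s) s - f (y s) s⟫ = ⟪f (x s) s - f (y s) s, w s⟫ :=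
      real_inner_comm _ _
    have hP : (0:ℝ) < Real.exp (2 * cm * (s - t₀)) := Real.exp_pos _
    rw [hcomm, hI1]
    nlinarith [mul_le_mul_of_nonneg_left hI2 hP.le]
  have hψcont : ContinuousOn ψ (Icc t₀ t) := by
    have hxc : ContinuousOn x (Icc t₀ t) := hxcont.mono Icc_subset_Ici_self
    have hyc : ContinuousOn y (Icc t₀ t) := hycont.mono Icc_subset_Ici_self
    have hwc : ContinuousOn w (Icc t₀ t) := hxc.sub hyc
    exact ((Real.continuous_exp.comp
      ((continuous_const.mul (continuous_id.sub continuous_const)))).continuousOn).mul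
      (hwc.inner hwc)
  have hψdiff : DifferentiableOn ℝ ψ (interior (Icc t₀ t)) := by
    rw [interior_Icc]
    exact fun s hs => ((hψD s hs).differentiableAt).differentiableWithinAt
  have hanti : AntitoneOn ψ (Icc t₀ t) := by
    refine antitoneOn_of_deriv_nonpos (convex_Icc t₀ t) hψcont hψdiff ?_
    rw [interior_Icc]
    exact hψderiv_nonpos
  have hψineq : ψ t ≤ ψ t₀ := hanti (left_mem_Icc.mpr ht) (right_mem_Icc.mpr ht) ht
  have hmain : Real.exp (2 * cm * (t - t₀)) * ‖x t - y t‖ ^ 2 ≤ ‖x t₀ - y t₀‖ ^ 2 := by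
    have h1 : ψ t = Real.exp (2 * cm * (t - t₀)) * ‖x t - y t‖ ^ 2 := by
      simp only [hψdef, hwdef]
      rw [real_inner_self_eq_norm_sq]
    have h2 : ψ t₀ = ‖x t₀ - y t₀‖ ^ 2 := by
      simp only [hψdef, hwdef]
      rw [real_inner_self_eq_norm_sq, sub_self, mul_zero, Real.exp_zero, one_mul]
    rw [h1, h2] at hψineq
    exact hψineq
  set N := ‖x t₀ - y t₀‖ with hN
  set aa := ‖x t - y t‖ with haa
  set E := Real.exp (-cm * (t - t₀)) with hE
  have hEsq : E ^ 2 * Real.exp (2 * cm * (t - t₀)) = 1 := by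
    rw [sq, hE, ← Real.exp_add, ← Real.exp_add]
    rw [show -cm * (t - t₀) + -cm * (t - t₀) + 2 * cm * (t - t₀) = 0 by ring, Real.exp_zero]
  have h3 : aa ^ 2 ≤ (E * N) ^ 2 := by
    have h4 := mul_le_mul_of_nonneg_left hmain (sq_nonneg E)
    calc aa ^ 2 = E ^ 2 * Real.exp (2 * cm * (t - t₀)) * aa ^ 2 := by rw [hEsq]; ring
      _ = E ^ 2 * (Real.exp (2 * cm * (t - t₀)) * aa ^ 2) := by ring
      _ ≤ E ^ 2 * N ^ 2 := h4
      _ = (E * N) ^ 2 := by ring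
  have haE : aa ≤ E * N :=
    le_of_pow_le_pow_left₀ two_ne_zero (mul_nonneg (Real.exp_pos _).le (norm_nonneg _)) h3
  by_cases hN0 : N = 0
  · rw [hN0] at haE ⊢
    simpa using haE
  · have hNpos : 0 < N := lt_of_le_of_ne (norm_nonneg _) (Ne.symm hN0)
    have hK1 : 1 ≤ K := by
      obtain ⟨γc, hγ1, hγ2, hγ3, hγ4, hγ5⟩ :=
        hC (x t₀) (hxC t₀ ⟨le_rfl, ht⟩) (y t₀) (hyC t₀ ⟨le_rfl, ht⟩)
      have hdiffγ : DifferentiableOn ℝ γc (Icc 0 1) := hγ1.differentiableOn one_ne_zero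
      have hest := Convex.norm_image_sub_le_of_norm_derivWithin_le (𝕜 := ℝ) hdiffγ hγ5
        (convex_Icc 0 1) (left_mem_Icc.mpr zero_le_one) (right_mem_Icc.mpr zero_le_one)
      rw [hγ3, hγ4] at hest
      have hnorm : ‖y t₀ - x t₀‖ = N := by rw [hN, norm_sub_rev]
      rw [hnorm] at hest
      simp only [sub_zero, norm_one] at hest
      nlinarith [hest]
    calc aa ≤ E * N := haE
      _ ≤ K * (E * N) := le_mul_of_one_le_left
          (mul_nonneg (Real.exp_pos _).le (norm_nonneg _)) hK1
      _ = K * E * N := by ring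
end
end

section
/- (Partial contraction via a virtual system.) Let f : ℝⁿ × ℝ → ℝⁿ and let v : ℝⁿ × ℝⁿ × ℝ → ℝⁿ satisfy v(x, x, t) = f(x, t) for all x and t. Suppose there is c > 0 such that for all a, b, z ∈ ℝⁿ and almost every t ≥ t₀, ⟨v(a,z,t) − v(b,z,t), a − b⟩ ≤ −c‖a − b‖² (the virtual system ẏ = v(y, z, t) is contracting in y uniformly in the input z). Let x be a Caratheodory solution of ẋ = f(x,t) and let y be a Caratheodory solution of ẏ = v(y, x(t), t). Then ‖x(t) − y(t)‖ ≤ e^{−c(t−t₀)} ‖x(t₀) − y(t₀)‖ for all t ≥ t₀; in particular every solution of ẋ = f(x,t) converges exponentially to the corresponding trajectory of the contracting virtual system. -/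
open scoped RealInnerProductSpace
open MeasureTheory
open Set intervalIntegral

section Aux

variable {E : Type*} [NormedAddCommGroup E] [InnerProductSpace ℝ E] [CompleteSpace E]

lemma sq_norm_primitive (w : ℝ → E) {s t : ℝ} (hst : s ≤ t)
    (hw : IntegrableOn w (Icc s t)) :
    ‖∫ τ in s..t, w τ‖ ^ 2 = 2 * ∫ τ in s..t, ⟪w τ, ∫ σ in s..τ, w σ⟫ := by
  set μ := volume.restrict (Icc s t) with hμ
  have hμw : Integrable w μ := hw
  set K : ℝ × ℝ → ℝ := fun p => ⟪w p.1, w p.2⟫ with hK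
  have hKm : AEStronglyMeasurable K (μ.prod μ) :=
    (hμw.aestronglyMeasurable.comp_fst).inner (hμw.aestronglyMeasurable.comp_snd)
  have hKi : Integrable K (μ.prod μ) := by
    refine (hμw.norm.mul_prod hμw.norm).mono' hKm ?_
    filter_upwards with p
    simpa [Real.norm_eq_abs, abs_mul, abs_of_nonneg (norm_nonneg _)] using
      norm_inner_le_norm (𝕜 := ℝ) (w p.1) (w p.2)
  -- diagonal is null
  have hdiagm : MeasurableSet {p : ℝ × ℝ | p.1 = p.2} :=
    measurableSet_eq_fun measurable_fst measurable_snd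
  have hdiag : (μ.prod μ) {p : ℝ × ℝ | p.1 = p.2} = 0 := by
    rw [Measure.prod_apply hdiagm]
    have : ∀ σ : ℝ, μ (Prod.mk σ ⁻¹' {p : ℝ × ℝ | p.1 = p.2}) = 0 := by
      intro σ
      have : Prod.mk σ ⁻¹' {p : ℝ × ℝ | p.1 = p.2} = {σ} := by
        ext τ; simp [eq_comm]
      rw [this]
      exact measure_mono_null (subset_rfl) (by simp [hμ, Measure.restrict_apply])
    simp [this]
  set T : Set (ℝ × ℝ) := {p | p.1 ≤ p.2} with hT
  have hTm : MeasurableSet T := measurableSet_le measurable_fst measurable_snd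
  -- swap
  have hswap : ∫ p in {p : ℝ × ℝ | p.2 ≤ p.1}, K p ∂(μ.prod μ) = ∫ p in T, K p ∂(μ.prod μ) := by
    have hmp : MeasurePreserving (Prod.swap : ℝ × ℝ → ℝ × ℝ) (μ.prod μ) (μ.prod μ) :=
      Measure.measurePreserving_swap
    have := hmp.setIntegral_preimage_emb (MeasurableEquiv.prodComm : ℝ × ℝ ≃ᵐ ℝ × ℝ).measurableEmbedding K T
    rw [← this]
    have h1 : (Prod.swap : ℝ × ℝ → ℝ × ℝ) ⁻¹' T = {p : ℝ × ℝ | p.2 ≤ p.1} := rfl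
    rw [h1]
    refine setIntegral_congr_fun (measurableSet_le measurable_snd measurable_fst) ?_
    intro p _
    simp [hK, real_inner_comm]
  have hcompl : {p : ℝ × ℝ | p.2 ≤ p.1} =ᵐ[μ.prod μ] Tᶜ := by
    have : ∀ᵐ p ∂(μ.prod μ), p.1 ≠ p.2 := by
      rw [MeasureTheory.ae_iff]
      simpa using hdiag
    filter_upwards [this] with p hp
    simp only [hT, mem_setOf_eq, mem_compl_iff, eq_iff_iff]
    constructor
    · intro h h'; exact hp (le_antisymm h' h)
    · intro h; exact le_of_not_ge h
  have hsplit : ∫ p, K p ∂(μ.prod μ) = 2 * ∫ p in T, K p ∂(μ.prod μ) := by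
    have := integral_add_compl hTm hKi (f := K)
    rw [← this, two_mul]
    congr 1
    exact (setIntegral_congr_set hcompl).symm.trans hswap
  -- LHS
  have hUt : ∫ σ, w σ ∂μ = ∫ τ in s..t, w τ := by
    rw [intervalIntegral.integral_of_le hst, hμ, ← integral_Icc_eq_integral_Ioc]
  have hLHS : ∫ p, K p ∂(μ.prod μ) = ‖∫ τ in s..t, w τ‖ ^ 2 := by
    rw [MeasureTheory.integral_prod _ hKi]
    have : ∀ σ : ℝ, ∫ τ, K (σ, τ) ∂μ = ⟪w σ, ∫ τ in s..t, w τ⟫ := fun σ => by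
      rw [← hUt]; exact integral_inner hμw (w σ)
    simp only [this]
    have h4 : ∀ σ : ℝ, ⟪w σ, ∫ τ in s..t, w τ⟫ = ⟪(∫ τ in s..t, w τ : E), w σ⟫ := fun σ =>
      real_inner_comm _ _
    simp only [h4]
    rw [integral_inner hμw, hUt, real_inner_self_eq_norm_sq]
  -- RHS
  have hRHS : ∫ p in T, K p ∂(μ.prod μ) = ∫ τ in s..t, ⟪w τ, ∫ σ in s..τ, w σ⟫ := by
    rw [← MeasureTheory.integral_indicator hTm,
      MeasureTheory.integral_prod_symm _ (hKi.indicator hTm)]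
    have hinner : ∀ τ ∈ Icc s t,
        (∫ σ, T.indicator K (σ, τ) ∂μ) = ⟪w τ, ∫ σ in s..τ, w σ⟫ := by
      intro τ hτ
      have h1 : (fun σ => T.indicator K (σ, τ)) = (Iic τ).indicator (fun σ => K (σ, τ)) := by
        ext σ
        by_cases h : σ ≤ τ <;> simp [Set.indicator_apply, hT, h]
      rw [h1, MeasureTheory.integral_indicator measurableSet_Iic, hμ,
        Measure.restrict_restrict measurableSet_Iic]
      have h2 : Iic τ ∩ Icc s t = Icc s τ := by
        ext σ; simp only [mem_inter_iff, mem_Iic, mem_Icc]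
        constructor
        · rintro ⟨h1', h2', _⟩; exact ⟨h2', h1'⟩
        · rintro ⟨h1', h2'⟩; exact ⟨h2', h1', h2'.trans hτ.2⟩
      rw [h2]
      have h3 : ∀ σ : ℝ, K (σ, τ) = ⟪w τ, w σ⟫ := fun σ => real_inner_comm _ _
      simp only [h3]
      rw [integral_inner (hw.mono_set (Icc_subset_Icc le_rfl hτ.2)) (w τ)]
      rw [integral_Icc_eq_integral_Ioc, ← intervalIntegral.integral_of_le hτ.1]
    calc ∫ τ, (∫ σ, T.indicator K (σ, τ) ∂μ) ∂μ
        = ∫ τ in Icc s t, ⟪w τ, ∫ σ in s..τ, w σ⟫ :=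
          setIntegral_congr_fun measurableSet_Icc hinner
      _ = ∫ τ in s..t, ⟪w τ, ∫ σ in s..τ, w σ⟫ := by
          rw [integral_Icc_eq_integral_Ioc, ← intervalIntegral.integral_of_le hst]
  rw [← hLHS, hsplit, hRHS]

lemma integrableOn_inner_of_continuousOn {w g : ℝ → E} {s t : ℝ}
    (hw : IntegrableOn w (Icc s t)) (hg : ContinuousOn g (Icc s t)) :
    IntegrableOn (fun τ => ⟪w τ, g τ⟫) (Icc s t) := by
  obtain ⟨M, hM⟩ := isCompact_Icc.exists_bound_of_continuousOn hg
  refine (hw.norm.mul_const M).mono'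
    (hw.aestronglyMeasurable.inner (hg.aestronglyMeasurable measurableSet_Icc)) ?_
  rw [ae_restrict_iff' measurableSet_Icc]
  filter_upwards with τ hτ
  calc ‖⟪w τ, g τ⟫‖ ≤ ‖w τ‖ * ‖g τ‖ := norm_inner_le_norm _ _
    _ ≤ ‖w τ‖ * M := mul_le_mul_of_nonneg_left (hM τ hτ) (norm_nonneg _)

lemma key_identity {w u : ℝ → E} {s t : ℝ} (hst : s ≤ t)
    (hw : IntegrableOn w (Icc s t))
    (hu : ∀ τ ∈ Icc s t, u τ = u s + ∫ σ in s..τ, w σ)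
    (hA : ‖∫ τ in s..t, w τ‖ ^ 2 = 2 * ∫ τ in s..t, ⟪w τ, ∫ σ in s..τ, w σ⟫) :
    ‖u t‖ ^ 2 - ‖u s‖ ^ 2 = 2 * ∫ τ in s..t, ⟪w τ, u τ⟫ := by
  set U : ℝ → E := fun τ => ∫ σ in s..τ, w σ with hU
  have hiw : IntervalIntegrable w volume s t :=
    (intervalIntegrable_iff_integrableOn_Icc_of_le hst).2 hw
  have hUcont : ContinuousOn U (Icc s t) := by
    have h0 : IntegrableOn w (uIcc s t) volume := by rwa [uIcc_of_le hst]
    have := intervalIntegral.continuousOn_primitive_interval (a := s) (b := t) h0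
    rwa [uIcc_of_le hst] at this
  have h1 : IntervalIntegrable (fun τ => ⟪u s, w τ⟫) volume s t := by
    rw [intervalIntegrable_iff] at hiw ⊢
    exact Integrable.const_inner _ hiw
  have h2 : IntervalIntegrable (fun τ => ⟪w τ, U τ⟫) volume s t :=
    (intervalIntegrable_iff_integrableOn_Icc_of_le hst).2
      (integrableOn_inner_of_continuousOn hw hUcont)
  have hsplit : ∫ τ in s..t, ⟪w τ, u τ⟫ =
      (∫ τ in s..t, ⟪u s, w τ⟫) + ∫ τ in s..t, ⟪w τ, U τ⟫ := by
    rw [← intervalIntegral.integral_add h1 h2]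
    apply intervalIntegral.integral_congr
    intro τ hτ
    rw [uIcc_of_le hst] at hτ
    simp only [hu τ hτ, inner_add_right, real_inner_comm (w τ) (u s)]
    rfl
  have h3 : ∫ τ in s..t, ⟪u s, w τ⟫ = ⟪u s, U t⟫ := by
    have := (innerSL ℝ (u s)).intervalIntegral_comp_comm hiw (a := s) (b := t)
    simpa using this
  have hut : u t = u s + U t := hu t ⟨hst, le_rfl⟩
  rw [hut, norm_add_sq_real, hsplit, h3]
  have hA' : ‖U t‖ ^ 2 = 2 * ∫ τ in s..t, ⟪w τ, U τ⟫ := hA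
  linarith [hA']


end Aux

noncomputable section

/-- Partial contraction via a virtual system: if the virtual system
`ẏ = v(y, z, t)` is contracting in `y` uniformly in the input `z`, and
`v(x, x, t) = f(x, t)`, then every Caratheodory solution `x` of `ẋ = f(x, t)`
converges exponentially to the corresponding trajectory `y` of the virtual
system driven by `x`. -/
theorem partial_contraction_virtual_system
    {n : ℕ}
    (f : EuclideanSpace ℝ (Fin n) → ℝ → EuclideanSpace ℝ (Fin n))
    (v : EuclideanSpace ℝ (Fin n) → EuclideanSpace ℝ (Fin n) → ℝ →
      EuclideanSpace ℝ (Fin n))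
    (hvf : ∀ x t, v x x t = f x t)
    (t₀ c : ℝ) (hc : 0 < c)
    (hcontr : ∀ᵐ t ∂(volume : Measure ℝ), t₀ ≤ t →
      ∀ a b z : EuclideanSpace ℝ (Fin n),
        ⟪v a z t - v b z t, a - b⟫ ≤ -c * ‖a - b‖ ^ 2)
    (x y : ℝ → EuclideanSpace ℝ (Fin n))
    (hx : IsCaratheodorySol (fun t z => f z t) t₀ x)
    (hy : IsCaratheodorySol (fun t w => v w (x t) t) t₀ y) :
    ∀ t, t₀ ≤ t → ‖x t - y t‖ ≤ Real.exp (-c * (t - t₀)) * ‖x t₀ - y t₀‖ := by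
  set u : ℝ → EuclideanSpace ℝ (Fin n) := fun τ => x τ - y τ with hu_def
  set w : ℝ → EuclideanSpace ℝ (Fin n) := fun τ => f (x τ) τ - v (y τ) (x τ) τ with hw_def
  set ψ : ℝ → ℝ := fun τ => ‖u τ‖ ^ 2 with hψ_def
  -- integrability of the two vector fields along the solutions
  have hF : ∀ t, t₀ ≤ t → IntervalIntegrable (fun τ => f (x τ) τ) volume t₀ t :=
    fun t ht => (hx.2 t ht).1
  have hG : ∀ t, t₀ ≤ t → IntervalIntegrable (fun τ => v (y τ) (x τ) τ) volume t₀ t :=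
    fun t ht => (hy.2 t ht).1
  have hFst : ∀ s t, t₀ ≤ s → s ≤ t → IntervalIntegrable (fun τ => f (x τ) τ) volume s t := by
    intro s t hs hst
    refine (hF t (hs.trans hst)).mono_set ?_
    rw [uIcc_of_le hst, uIcc_of_le (hs.trans hst)]
    exact Icc_subset_Icc hs le_rfl
  have hGst : ∀ s t, t₀ ≤ s → s ≤ t → IntervalIntegrable (fun τ => v (y τ) (x τ) τ) volume s t := by
    intro s t hs hst
    refine (hG t (hs.trans hst)).mono_set ?_
    rw [uIcc_of_le hst, uIcc_of_le (hs.trans hst)]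
    exact Icc_subset_Icc hs le_rfl
  have hWst : ∀ s t, t₀ ≤ s → s ≤ t → IntegrableOn w (Icc s t) volume := by
    intro s t hs hst
    exact (intervalIntegrable_iff_integrableOn_Icc_of_le hst).1
      ((hFst s t hs hst).sub (hGst s t hs hst))
  -- integral equation for u
  have hu_eq : ∀ s τ, t₀ ≤ s → s ≤ τ → u τ = u s + ∫ σ in s..τ, w σ := by
    intro s τ hs hsτ
    have hxτ := (hx.2 τ (hs.trans hsτ)).2
    have hxs := (hx.2 s hs).2
    have hyτ := (hy.2 τ (hs.trans hsτ)).2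
    have hys := (hy.2 s hs).2
    have h1 : x τ - x s = ∫ σ in s..τ, f (x σ) σ := by
      rw [hxτ, hxs, ← intervalIntegral.integral_interval_sub_left (hF τ (hs.trans hsτ)) (hF s hs)]
      abel
    have h2 : y τ - y s = ∫ σ in s..τ, v (y σ) (x σ) σ := by
      rw [hyτ, hys, ← intervalIntegral.integral_interval_sub_left (hG τ (hs.trans hsτ)) (hG s hs)]
      abel
    have h3 : u τ - u s = ∫ σ in s..τ, w σ := by
      rw [hw_def]
      rw [intervalIntegral.integral_sub (hFst s τ hs hsτ) (hGst s τ hs hsτ), ← h1, ← h2]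
      simp only [hu_def]
      abel
    linear_combination (norm := abel) h3
  -- continuity of u and ψ
  have hucont : ContinuousOn u (Ici t₀) := hx.1.sub hy.1
  have hψcont : ContinuousOn ψ (Ici t₀) := (hucont.norm.pow 2)
  -- the key differential-inequality-in-integral-form
  have hkey : ∀ s t, t₀ ≤ s → s ≤ t → ψ t - ψ s = 2 * ∫ τ in s..t, ⟪w τ, u τ⟫ := by
    intro s t hs hst
    exact key_identity hst (hWst s t hs hst) (fun τ hτ => hu_eq s τ hs hτ.1)
      (sq_norm_primitive w hst (hWst s t hs hst))
  -- a.e. pointwise contraction bound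
  have hae : ∀ᵐ τ ∂(volume : Measure ℝ), t₀ ≤ τ → ⟪w τ, u τ⟫ ≤ -c * ψ τ := by
    filter_upwards [hcontr] with τ hτ hτ0
    have := hτ hτ0 (x τ) (y τ) (x τ)
    rw [hvf (x τ) τ] at this
    simpa only [hw_def, hu_def, hψ_def] using this
  -- interval integrability of the inner product
  have hWUint : ∀ s t, t₀ ≤ s → s ≤ t →
      IntervalIntegrable (fun τ => ⟪w τ, u τ⟫) volume s t := by
    intro s t hs hst
    exact (intervalIntegrable_iff_integrableOn_Icc_of_le hst).2
      (integrableOn_inner_of_continuousOn (hWst s t hs hst)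
        (hucont.mono (Icc_subset_Ici_self.trans (Ici_subset_Ici.2 hs))))
  -- Gronwall
  intro T hT
  have hgron := le_gronwallBound_of_liminf_deriv_right_le
    (f := ψ) (f' := fun τ => -(2 * c) * ψ τ) (δ := ψ t₀) (K := -(2 * c)) (ε := 0)
    (a := t₀) (b := T)
    (hψcont.mono Icc_subset_Ici_self)
    ?_ le_rfl (fun τ _ => by rw [add_zero]) T ⟨hT, le_rfl⟩
  · -- conclude from `ψ T ≤ ψ t₀ * exp (-2c (T - t₀))`
    rw [gronwallBound_ε0] at hgron
    have hsq : ‖u T‖ ^ 2 ≤ (Real.exp (-c * (T - t₀)) * ‖u t₀‖) ^ 2 := by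
      have hexp : (Real.exp (-c * (T - t₀))) ^ 2 = Real.exp (-(2 * c) * (T - t₀)) := by
        rw [sq, ← Real.exp_add]; ring_nf
      calc ‖u T‖ ^ 2 = ψ T := rfl
        _ ≤ ψ t₀ * Real.exp (-(2 * c) * (T - t₀)) := hgron
        _ = (Real.exp (-c * (T - t₀)) * ‖u t₀‖) ^ 2 := by
            rw [mul_pow, hexp, hψ_def]; ring
    exact le_of_pow_le_pow_left₀ two_ne_zero (by positivity) hsq
  · -- the liminf-slope condition
    intro s hs r hr
    -- choose a midpoint value r'
    set r' : ℝ := (-(2 * c) * ψ s + r) / 2 with hr'_def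
    have hr'1 : -(2 * c) * ψ s < r' := by rw [hr'_def]; linarith
    have hr'2 : r' < r := by rw [hr'_def]; linarith
    -- continuity gives a ball where -(2c) ψ < r'
    have hgcont : ContinuousWithinAt (fun τ => -(2 * c) * ψ τ) (Ici t₀) s :=
      (hψcont.const_smul (-(2 * c))).continuousWithinAt hs.1
    have hnb : {τ : ℝ | -(2 * c) * ψ τ < r'} ∈ nhdsWithin s (Ici t₀) := by
      have : Iio r' ∈ nhds (-(2 * c) * ψ s) := Iio_mem_nhds hr'1
      exact hgcont this
    obtain ⟨ε', hε', hball⟩ := Metric.mem_nhdsWithin_iff.1 hnb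
    refine Filter.Eventually.frequently ?_
    filter_upwards [Ioo_mem_nhdsGT_of_mem (show s ∈ Ico s (s + ε') from ⟨le_rfl, by linarith⟩)] with z hz
    obtain ⟨hsz, hzε⟩ := hz
    -- bound the integral
    have hle : ∫ τ in s..z, ⟪w τ, u τ⟫ ≤ ∫ τ in s..z, (r' / 2 : ℝ) := by
      apply intervalIntegral.integral_mono_ae_restrict hsz.le (hWUint s z hs.1 hsz.le)
        intervalIntegrable_const
      filter_upwards [ae_restrict_of_ae hae, ae_restrict_mem measurableSet_Icc] with τ h1 h2
      have hτ0 : t₀ ≤ τ := hs.1.trans h2.1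
      have hτball : τ ∈ Metric.ball s ε' ∩ Ici t₀ := by
        constructor
        · rw [Metric.mem_ball, Real.dist_eq, abs_of_nonneg (by linarith [h2.1])]
          linarith [h2.2]
        · exact hτ0
      have := hball hτball
      have h3 : ⟪w τ, u τ⟫ ≤ -c * ψ τ := h1 hτ0
      have h4 : -(2 * c) * ψ τ < r' := this
      linarith
    rw [intervalIntegral.integral_const, smul_eq_mul] at hle
    have hψz : ψ z - ψ s = 2 * ∫ τ in s..z, ⟪w τ, u τ⟫ := hkey s z hs.1 hsz.le
    have hpos : (0 : ℝ) < z - s := by linarith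
    rw [← div_eq_inv_mul, div_lt_iff₀ hpos]
    calc ψ z - ψ s ≤ (z - s) * r' := by rw [hψz]; linarith
      _ < r * (z - s) := by rw [mul_comm]; exact mul_lt_mul_of_pos_right hr'2 hpos
end
end

section
/- (Stability of arbitrarily switched linear systems, Euclidean matrix measure.) Let A : ℝ → M_n(ℝ) be a measurable, bounded matrix-valued function (e.g. arising from a switched linear system ẋ = A(t,σ)x), and let c > 0 be such that for almost every t ≥ t₀ and every v ∈ ℝⁿ, vᵀ A(t) v ≤ −c‖v‖². Then every Caratheodory solution x of ẋ = A(t)x satisfies ‖x(t)‖ ≤ e^{−c(t−t₀)} ‖x(t₀)‖ for all t ≥ t₀, independently of the switching sequence; in particular all solutions converge asymptotically to the origin and exponentially towards each other. -/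
open scoped RealInnerProductSpace
open MeasureTheory

noncomputable section

section Aux

open Set

variable {E : Type*} [NormedAddCommGroup E] [InnerProductSpace ℝ E] [CompleteSpace E]

private lemma sq_norm_setIntegral_aux {g : ℝ → E} {a b : ℝ} (hab : a ≤ b)
    (hg : IntegrableOn g (Set.Ioc a b)) :
    (‖∫ s in Set.Ioc a b, g s‖ ^ 2 =
      2 * ∫ τ in Set.Ioc a b, ⟪g τ, ∫ s in Set.Ioc a τ, g s⟫) ∧
    IntegrableOn (fun τ => ⟪g τ, ∫ s in Set.Ioc a τ, g s⟫) (Set.Ioc a b) := by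
  set ν := (volume : Measure ℝ).restrict (Set.Ioc a b) with hν
  have hgi : Integrable g ν := hg
  have hgm : AEStronglyMeasurable g ν := hgi.aestronglyMeasurable
  set K : ℝ × ℝ → ℝ := fun p => ⟪g p.1, g p.2⟫ with hK_def
  have hKm : AEStronglyMeasurable K (ν.prod ν) := hgm.comp_fst.inner hgm.comp_snd
  have hK : Integrable K (ν.prod ν) := by
    refine (hgi.norm.mul_prod hgi.norm).mono' hKm ?_
    exact Filter.Eventually.of_forall fun p => norm_inner_le_norm _ _
  set S : Set (ℝ × ℝ) := {p | p.2 ≤ p.1} with hS_def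
  have hS : MeasurableSet S := measurableSet_le measurable_snd measurable_fst
  set S' : Set (ℝ × ℝ) := {p | p.1 < p.2} with hS'_def
  have hS' : MeasurableSet S' := measurableSet_lt measurable_fst measurable_snd
  set T' : Set (ℝ × ℝ) := {p | p.2 < p.1} with hT'_def
  have hT' : MeasurableSet T' := measurableSet_lt measurable_snd measurable_fst
  have hcompl : S' = Sᶜ := by ext p; simp [hS_def, hS'_def, not_le]
  have hKle : Integrable (S.indicator K) (ν.prod ν) := hK.indicator hS
  have hKgt : Integrable (S'.indicator K) (ν.prod ν) := hK.indicator hS'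
  -- inner integral of the lower-triangle indicator
  have hJ : ∀ τ ∈ Set.Ioc a b,
      (∫ s in Set.Ioc a b, S.indicator K (τ, s)) = ⟪g τ, ∫ s in Set.Ioc a τ, g s⟫ := by
    intro τ hτ
    have h1 : ∀ s, S.indicator K (τ, s) = (Set.Iic τ).indicator (fun s => ⟪g τ, g s⟫) s := by
      intro s
      simp [hS_def, Set.indicator_apply, hK_def]
    simp only [h1]
    rw [setIntegral_indicator measurableSet_Iic, Set.Ioc_inter_Iic,
      min_eq_right hτ.2]
    exact integral_inner (hg.mono_set (Set.Ioc_subset_Ioc_right hτ.2)) (g τ)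
  -- inner integral of the strict lower-triangle indicator
  have hJ' : ∀ τ ∈ Set.Ioc a b,
      (∫ s in Set.Ioc a b, T'.indicator K (τ, s)) = ⟪g τ, ∫ s in Set.Ioc a τ, g s⟫ := by
    intro τ hτ
    have h1 : ∀ s, T'.indicator K (τ, s) = (Set.Iio τ).indicator (fun s => ⟪g τ, g s⟫) s := by
      intro s
      simp [hT'_def, Set.indicator_apply, hK_def]
    simp only [h1]
    rw [setIntegral_indicator measurableSet_Iio]
    have h2 : Set.Ioc a b ∩ Set.Iio τ = Set.Ioo a τ := by
      ext s
      simp only [Set.mem_inter_iff, Set.mem_Ioc, Set.mem_Iio, Set.mem_Ioo]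
      exact ⟨fun h => ⟨h.1.1, h.2⟩, fun h => ⟨⟨h.1, h.2.le.trans hτ.2⟩, h.2⟩⟩
    rw [h2, ← integral_Ioc_eq_integral_Ioo]
    exact integral_inner (hg.mono_set (Set.Ioc_subset_Ioc_right hτ.2)) (g τ)
  -- integrability of the running-inner function
  have hint : IntegrableOn (fun τ => ⟪g τ, ∫ s in Set.Ioc a τ, g s⟫) (Set.Ioc a b) := by
    have := hKle.integral_prod_left
    refine this.congr ?_
    filter_upwards [ae_restrict_mem measurableSet_Ioc] with τ hτ
    exact hJ τ hτ
  refine ⟨?_, hint⟩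
  -- the lower-triangle double integral
  have hA : ∫ p, S.indicator K p ∂(ν.prod ν)
      = ∫ τ in Set.Ioc a b, ⟪g τ, ∫ s in Set.Ioc a τ, g s⟫ := by
    rw [integral_prod _ hKle]
    exact setIntegral_congr_fun measurableSet_Ioc fun τ hτ => hJ τ hτ
  -- upper triangle equals lower strict triangle by swapping
  have hB : ∫ p, S'.indicator K p ∂(ν.prod ν)
      = ∫ τ in Set.Ioc a b, ⟪g τ, ∫ s in Set.Ioc a τ, g s⟫ := by
    have hswapfun : (fun z : ℝ × ℝ => S'.indicator K z.swap) = T'.indicator K := by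
      funext z
      simp [hS'_def, hT'_def, Set.indicator_apply, hK_def, Prod.swap, real_inner_comm]
    rw [← integral_prod_swap (S'.indicator K), hswapfun, integral_prod _ (hK.indicator hT')]
    exact setIntegral_congr_fun measurableSet_Ioc fun τ hτ => hJ' τ hτ
  -- square of the total integral
  have hsq : ‖∫ s in Set.Ioc a b, g s‖ ^ 2 = ∫ p, K p ∂(ν.prod ν) := by
    rw [integral_prod _ hK]
    have h1 : ∀ τ, (∫ s in Set.Ioc a b, K (τ, s)) = ⟪g τ, ∫ s in Set.Ioc a b, g s⟫ :=
      fun τ => integral_inner hg (g τ)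
    simp only [hν, h1]
    have h2 : ∀ τ, ⟪g τ, ∫ s in Set.Ioc a b, g s⟫ = ⟪(∫ s in Set.Ioc a b, g s), g τ⟫ :=
      fun τ => real_inner_comm _ _
    simp only [h2]
    rw [integral_inner hg]
    exact (real_inner_self_eq_norm_sq _).symm
  have hsplit : ∫ p, K p ∂(ν.prod ν)
      = (∫ p, S.indicator K p ∂(ν.prod ν)) + ∫ p, S'.indicator K p ∂(ν.prod ν) := by
    rw [← integral_add hKle hKgt]
    refine integral_congr_ae (Filter.Eventually.of_forall fun p => ?_)
    rw [hcompl]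
    exact (Set.indicator_self_add_compl_apply S K p).symm
  rw [hsq, hsplit, hA, hB]; ring


private lemma energy_identity_aux {g x : ℝ → E} {t₀ : ℝ}
    (hint : ∀ t, t₀ ≤ t → IntervalIntegrable g volume t₀ t)
    (hrep : ∀ t, t₀ ≤ t → x t = x t₀ + ∫ τ in t₀..t, g τ)
    {t : ℝ} (ht : t₀ ≤ t) :
    (‖x t‖ ^ 2 = ‖x t₀‖ ^ 2 + ∫ τ in t₀..t, 2 * ⟪g τ, x τ⟫) ∧
    IntervalIntegrable (fun τ => 2 * ⟪g τ, x τ⟫) volume t₀ t := by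
  have hg : IntegrableOn g (Set.Ioc t₀ t) :=
    (intervalIntegrable_iff_integrableOn_Ioc_of_le ht).1 (hint t ht)
  obtain ⟨hfub, hintg⟩ := sq_norm_setIntegral_aux ht hg
  set J := ∫ s in Set.Ioc t₀ t, g s with hJ_def
  -- pointwise rewriting of the integrand on `Ioc t₀ t`
  have heq : ∀ τ ∈ Set.Ioc t₀ t,
      2 * ⟪g τ, x τ⟫ = 2 * ⟪g τ, x t₀⟫ + 2 * ⟪g τ, ∫ s in Set.Ioc t₀ τ, g s⟫ := by
    intro τ hτ
    rw [hrep τ hτ.1.le, intervalIntegral.integral_of_le hτ.1.le, inner_add_right]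
    ring
  have hp1 : IntegrableOn (fun τ => ⟪g τ, x t₀⟫) (Set.Ioc t₀ t) := hg.inner_const (x t₀)
  have hpsum : IntegrableOn
      (fun τ => 2 * ⟪g τ, x t₀⟫ + 2 * ⟪g τ, ∫ s in Set.Ioc t₀ τ, g s⟫) (Set.Ioc t₀ t) :=
    (hp1.const_mul 2).add (hintg.const_mul 2)
  have hii : IntervalIntegrable (fun τ => 2 * ⟪g τ, x τ⟫) volume t₀ t := by
    rw [intervalIntegrable_iff_integrableOn_Ioc_of_le ht]
    refine hpsum.congr ?_
    filter_upwards [ae_restrict_mem measurableSet_Ioc] with τ hτ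
    exact (heq τ hτ).symm
  refine ⟨?_, hii⟩
  have hval : ∫ τ in t₀..t, 2 * ⟪g τ, x τ⟫ = 2 * ⟪J, x t₀⟫ + ‖J‖ ^ 2 := by
    rw [intervalIntegral.integral_of_le ht,
      setIntegral_congr_fun measurableSet_Ioc heq,
      integral_add (hp1.const_mul 2) (hintg.const_mul 2),
      MeasureTheory.integral_const_mul, MeasureTheory.integral_const_mul]
    have h1 : ∫ τ in Set.Ioc t₀ t, ⟪g τ, x t₀⟫ = ⟪J, x t₀⟫ := by
      have : ∀ τ, ⟪g τ, x t₀⟫ = ⟪x t₀, g τ⟫ := fun τ => real_inner_comm _ _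
      simp only [this]
      rw [integral_inner hg]
      exact real_inner_comm _ _
    rw [h1, ← hfub]
  rw [hval, hrep t ht, intervalIntegral.integral_of_le ht, ← hJ_def, norm_add_sq_real,
    real_inner_comm]
  ring


end Aux

section Main

open Set

/-- Stability of arbitrarily switched linear systems (Euclidean matrix
measure): if the measurable bounded matrix function `A(t)` satisfies
`vᵀ A(t) v ≤ -c ‖v‖²` for a.e. `t ≥ t₀`, then every Caratheodory solution of
`ẋ = A(t) x` decays exponentially to the origin with rate `c`. -/
theorem switched_linear_stability_mu2
    {n : ℕ}
    (A : ℝ → Matrix (Fin n) (Fin n) ℝ)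
    (hmeas : ∀ i j, Measurable fun t => A t i j)
    (hbdd : ∃ M : ℝ, ∀ t i j, |A t i j| ≤ M)
    (t₀ c : ℝ) (hc : 0 < c)
    (hμ : ∀ᵐ t ∂(volume : Measure ℝ), t₀ ≤ t →
      ∀ v : EuclideanSpace ℝ (Fin n),
        ⟪Matrix.toEuclideanLin (A t) v, v⟫ ≤ -c * ‖v‖ ^ 2)
    (x : ℝ → EuclideanSpace ℝ (Fin n))
    (hx : IsCaratheodorySol (fun t z => Matrix.toEuclideanLin (A t) z) t₀ x) :
    ∀ t, t₀ ≤ t → ‖x t‖ ≤ Real.exp (-c * (t - t₀)) * ‖x t₀‖ := by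
  intro t ht
  set g : ℝ → EuclideanSpace ℝ (Fin n) := fun τ => Matrix.toEuclideanLin (A τ) (x τ) with hg_def
  have hint : ∀ T, t₀ ≤ T → IntervalIntegrable g volume t₀ T := fun T hT => (hx.2 T hT).1
  have hrep : ∀ T, t₀ ≤ T → x T = x t₀ + ∫ τ in t₀..T, g τ := fun T hT => (hx.2 T hT).2
  set u : ℝ → ℝ := fun τ => ‖x τ‖ ^ 2 with hu_def
  set h : ℝ → ℝ := fun τ => 2 * ⟪g τ, x τ⟫ with hh_def
  have hu_cont : ContinuousOn u (Set.Ici t₀) := hx.1.norm.pow 2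
  have henergy : ∀ T, t₀ ≤ T →
      (u T = u t₀ + ∫ τ in t₀..T, h τ) ∧ IntervalIntegrable h volume t₀ T :=
    fun T hT => energy_identity_aux hint hrep hT
  -- a.e. differential inequality
  have h_ae : ∀ᵐ τ ∂(volume : Measure ℝ), t₀ ≤ τ → h τ ≤ -(2 * c) * u τ := by
    filter_upwards [hμ] with τ hτ hτ'
    have := hτ hτ' (x τ)
    simp only [hh_def, hu_def, hg_def]
    nlinarith [this]
  -- integral inequality between any two times
  have hkey : ∀ s z, t₀ ≤ s → s ≤ z → u z - u s ≤ ∫ τ in s..z, -(2 * c) * u τ := by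
    intro s z hs hsz
    have hz : t₀ ≤ z := hs.trans hsz
    have h1 : u z - u s = ∫ τ in s..z, h τ := by
      rw [(henergy z hz).1, (henergy s hs).1]
      rw [add_sub_add_left_eq_sub]
      exact intervalIntegral.integral_interval_sub_left (henergy z hz).2 (henergy s hs).2
    rw [h1]
    have hsub : Set.uIcc s z ⊆ Set.uIcc t₀ z := by
      rw [Set.uIcc_of_le hsz, Set.uIcc_of_le hz]
      exact Set.Icc_subset_Icc hs le_rfl
    have hIcc : Set.Icc s z ⊆ Set.Ici t₀ := fun τ hτ => hs.trans hτ.1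
    refine intervalIntegral.integral_mono_ae_restrict hsz ((henergy z hz).2.mono_set hsub) ?_ ?_
    · apply ContinuousOn.intervalIntegrable
      rw [Set.uIcc_of_le hsz]
      exact continuousOn_const.mul (hu_cont.mono hIcc)
    · filter_upwards [ae_restrict_mem measurableSet_Icc,
        ae_restrict_of_ae h_ae] with τ hτ hτ'
      exact hτ' (hs.trans hτ.1)
  -- the liminf slope condition for Grönwall
  have hf' : ∀ s ∈ Set.Ico t₀ t, ∀ r, -(2 * c) * u s < r →
      ∃ᶠ z in nhdsWithin s (Set.Ioi s), (z - s)⁻¹ * (u z - u s) < r := by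
    intro s hs r hr
    set W : ℝ → ℝ := fun z => ∫ τ in s..z, -(2 * c) * u τ with hW_def
    have hWd : HasDerivWithinAt W (-(2 * c) * u s) (Set.Ici s) s := by
      refine intervalIntegral.integral_hasDerivWithinAt_right
        (f := fun τ => -(2 * c) * u τ) (a := s) (b := s) (s := Set.Ici s) (t := Set.Ioi s)
        IntervalIntegrable.refl ?_ ?_
      · refine ⟨Set.Ioi s, self_mem_nhdsWithin, ?_⟩
        refine ContinuousOn.aestronglyMeasurable ?_ measurableSet_Ioi
        exact continuousOn_const.mul
          (hu_cont.mono fun τ hτ => hs.1.trans (le_of_lt hτ))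
      · refine ContinuousWithinAt.mono ?_
          (Set.Ioi_subset_Ici_self.trans (Set.Ici_subset_Ici.2 hs.1))
        exact (continuousOn_const.mul hu_cont).continuousWithinAt hs.1
    have hWd' : HasDerivWithinAt W (-(2 * c) * u s) (Set.Ioi s) s :=
      hWd.mono Set.Ioi_subset_Ici_self
    rw [hasDerivWithinAt_iff_tendsto_slope] at hWd'
    have hsdiff : Set.Ioi s \ {s} = Set.Ioi s := by
      apply Set.diff_singleton_eq_self
      simp
    rw [hsdiff] at hWd'
    have hev : ∀ᶠ z in nhdsWithin s (Set.Ioi s), slope W s z < r :=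
      hWd'.eventually_lt_const hr
    refine Filter.Eventually.frequently ?_
    filter_upwards [hev, self_mem_nhdsWithin] with z hz1 hz2
    have hzs : s < z := hz2
    have hWs : W s = 0 := intervalIntegral.integral_same
    have hle : u z - u s ≤ W z := hkey s z hs.1 hzs.le
    have hslope : slope W s z = (z - s)⁻¹ * (W z - W s) := by
      rw [slope_def_field]
      field_simp
    calc (z - s)⁻¹ * (u z - u s) ≤ (z - s)⁻¹ * (W z - W s) := by
          rw [hWs, sub_zero]
          exact mul_le_mul_of_nonneg_left hle (inv_nonneg.2 (sub_nonneg.2 hzs.le))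
      _ = slope W s z := hslope.symm
      _ < r := hz1
  -- Grönwall
  have hgron := le_gronwallBound_of_liminf_deriv_right_le
    (f := u) (f' := fun s => -(2 * c) * u s) (δ := u t₀) (K := -(2 * c)) (ε := 0)
    (a := t₀) (b := t) (hu_cont.mono Set.Icc_subset_Ici_self) hf' le_rfl
    (fun s _ => by rw [add_zero]) t (Set.right_mem_Icc.2 ht)
  rw [gronwallBound_ε0] at hgron
  have hE : Real.exp (-(2 * c) * (t - t₀)) = Real.exp (-c * (t - t₀)) ^ 2 := by
    rw [sq, ← Real.exp_add]
    ring_nf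
  rw [hE] at hgron
  have h1 : (0:ℝ) < Real.exp (-c * (t - t₀)) := Real.exp_pos _
  have h2 : (0:ℝ) ≤ ‖x t₀‖ := norm_nonneg _
  have h3 : (0:ℝ) ≤ ‖x t‖ := norm_nonneg _
  have h4 : ‖x t‖ ^ 2 ≤ (Real.exp (-c * (t - t₀)) * ‖x t₀‖) ^ 2 := by
    calc ‖x t‖ ^ 2 = u t := rfl
      _ ≤ u t₀ * Real.exp (-c * (t - t₀)) ^ 2 := hgron
      _ = (Real.exp (-c * (t - t₀)) * ‖x t₀‖) ^ 2 := by simp only [hu_def]; ring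
  nlinarith [sq_nonneg (‖x t‖ - Real.exp (-c * (t - t₀)) * ‖x t₀‖),
    sq_nonneg (‖x t‖ + Real.exp (-c * (t - t₀)) * ‖x t₀‖), mul_nonneg h1.le h2]


end Main

end
end

section
/- (Stability of arbitrarily switched linear systems, ℓ¹ matrix measure.) Let A : ℝ → M_n(ℝ) be a measurable, bounded matrix-valued function, and let c > 0 be such that for almost every t ≥ t₀ and every column index j, A(t)_{jj} + Σ_{i ≠ j} |A(t)_{ij}| ≤ −c (i.e., the matrix measure induced by the ℓ¹ vector norm satisfies μ₁(A(t)) ≤ −c). Then every Caratheodory solution x of ẋ = A(t)x satisfies ‖x(t)‖₁ ≤ e^{−c(t−t₀)} ‖x(t₀)‖₁ for all t ≥ t₀, where ‖v‖₁ = Σᵢ |vᵢ|; in particular all solutions converge to the origin. -/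
open MeasureTheory Matrix

noncomputable section

set_option maxHeartbeats 1000000 in
/-- Stability of arbitrarily switched linear systems (`ℓ¹` matrix measure):
if the measurable bounded matrix function `A(t)` has `ℓ¹`-matrix measure
`μ₁(A(t)) = max_j (A(t)_{jj} + Σ_{i ≠ j} |A(t)_{ij}|) ≤ -c` for a.e. `t ≥ t₀`,
then every Caratheodory solution of `ẋ = A(t) x` decays exponentially to the
origin in the `ℓ¹` norm with rate `c`. -/
theorem switched_linear_stability_mu1
    {n : ℕ}
    (A : ℝ → Matrix (Fin n) (Fin n) ℝ)
    (hmeas : ∀ i j, Measurable fun t => A t i j)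
    (hbdd : ∃ M : ℝ, ∀ t i j, |A t i j| ≤ M)
    (t₀ c : ℝ) (hc : 0 < c)
    (hμ : ∀ᵐ t ∂(volume : Measure ℝ), t₀ ≤ t → ∀ j : Fin n,
      A t j j + ∑ i ∈ Finset.univ.erase j, |A t i j| ≤ -c)
    (x : ℝ → Fin n → ℝ)
    (hx : IsCaratheodorySol (fun t z => (A t).mulVec z) t₀ x) :
    ∀ t, t₀ ≤ t → ∑ i, |x t i| ≤ Real.exp (-c * (t - t₀)) * ∑ i, |x t₀ i| := by
  obtain ⟨M₀, hM₀⟩ := hbdd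
  set M : ℝ := max M₀ 0 with hMdef
  have hM0 : (0:ℝ) ≤ M := le_max_right _ _
  have hAM : ∀ t i j, |A t i j| ≤ M := fun t i j => (hM₀ t i j).trans (le_max_left _ _)
  obtain ⟨hxc, hxint⟩ := hx
  set V : ℝ → ℝ := fun t => ∑ i, |x t i| with hVdef
  -- interval integrability of the RHS on subintervals
  have hII : ∀ s z, t₀ ≤ s → s ≤ z →
      IntervalIntegrable (fun τ => (A τ).mulVec (x τ)) volume s z := by
    intro s z hs hz
    refine (hxint z (hs.trans hz)).1.mono_set ?_
    rw [Set.uIcc_of_le hz, Set.uIcc_of_le (hs.trans hz)]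
    exact Set.Icc_subset_Icc hs le_rfl
  have hIIc : ∀ (s z : ℝ) (i : Fin n), t₀ ≤ s → s ≤ z →
      IntervalIntegrable (fun τ => ((A τ).mulVec (x τ)) i) volume s z := by
    intro s z i hs hz
    have h := hII s z hs hz
    exact ⟨(ContinuousLinearMap.proj (R := ℝ) (φ := fun _ : Fin n => ℝ) i).integrable_comp h.1,
      (ContinuousLinearMap.proj (R := ℝ) (φ := fun _ : Fin n => ℝ) i).integrable_comp h.2⟩
  -- componentwise integral equation
  have hxeq : ∀ (s z : ℝ) (i : Fin n), t₀ ≤ s → s ≤ z →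
      x z i = x s i + ∫ τ in s..z, ((A τ).mulVec (x τ)) i := by
    intro s z i hs hz
    have e1 := (hxint z (hs.trans hz)).2
    have e2 := (hxint s hs).2
    have hadd := intervalIntegral.integral_add_adjacent_intervals
      (hII t₀ s le_rfl hs) (hII s z hs hz)
    have hPi : x z = x s + ∫ τ in s..z, (A τ).mulVec (x τ) := by
      rw [e1, e2, ← hadd]; abel
    have hcomp : (∫ τ in s..z, ((A τ).mulVec (x τ))) i
        = ∫ τ in s..z, ((A τ).mulVec (x τ)) i := by
      have := (ContinuousLinearMap.proj (R := ℝ) (φ := fun _ : Fin n => ℝ) i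
        ).intervalIntegral_comp_comm (hII s z hs hz)
      simpa using this.symm
    have := congrFun hPi i
    simpa [hcomp] using this
  have hxci : ∀ i, ContinuousOn (fun t => x t i) (Set.Ici t₀) :=
    fun i => (continuous_apply i).comp_continuousOn hxc
  have hVc : ContinuousOn V (Set.Ici t₀) :=
    continuousOn_finset_sum _ fun i _ => (hxci i).abs
  intro t ht
  -- Gronwall
  have key : ∀ s ∈ Set.Ico t₀ t, ∀ r : ℝ, -c * V s < r →
      ∃ᶠ z in nhdsWithin s (Set.Ioi s), (z - s)⁻¹ * (V z - V s) < r := by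
    intro s hs r hr
    set η : ℝ := (r + c * V s) / 2 with hηdef
    have hη : 0 < η := by unfold η; linarith
    have hlt : -c * V s + η < r := by unfold η; linarith
    -- eventual good properties near s within Ici t₀
    have hP : ∀ᶠ τ in nhdsWithin s (Set.Ici t₀),
        (∀ i, 0 < x s i → 0 < x τ i) ∧ (∀ i, x s i < 0 → x τ i < 0) ∧
        M * n * (∑ j, |x τ j - x s j|) ≤ η := by
      have hcw : ∀ i, ContinuousWithinAt (fun τ => x τ i) (Set.Ici t₀) s :=
        fun i => (hxci i) s hs.1
      refine (Filter.eventually_all.2 fun i => ?_).and ((Filter.eventually_all.2 fun i => ?_).and ?_)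
      · by_cases hpos : 0 < x s i
        · exact ((hcw i).eventually (eventually_gt_nhds hpos)).mono fun τ h _ => h
        · exact Filter.Eventually.of_forall fun τ h => absurd h hpos
      · by_cases hneg : x s i < 0
        · exact ((hcw i).eventually (eventually_lt_nhds hneg)).mono fun τ h _ => h
        · exact Filter.Eventually.of_forall fun τ h => absurd h hneg
      · have hsum : Filter.Tendsto (fun τ => ∑ j, |x τ j - x s j|)
            (nhdsWithin s (Set.Ici t₀)) (nhds (∑ j : Fin n, |x s j - x s j|)) :=
          tendsto_finset_sum _ fun j _ => ((hcw j).sub continuousWithinAt_const).abs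
        have hφ : Filter.Tendsto (fun τ => M * n * (∑ j, |x τ j - x s j|))
            (nhdsWithin s (Set.Ici t₀)) (nhds 0) := by
          simpa using hsum.const_mul (M * (n:ℝ))
        exact hφ.eventually (eventually_le_nhds hη)
    obtain ⟨δ, hδpos, hδsub⟩ := Metric.mem_nhdsWithin_iff.1 hP
    have hδ : ∀ τ : ℝ, t₀ ≤ τ → dist τ s < δ →
        (∀ i, 0 < x s i → 0 < x τ i) ∧ (∀ i, x s i < 0 → x τ i < 0) ∧
        M * n * (∑ j, |x τ j - x s j|) ≤ η :=
      fun τ h1 h2 => hδsub ⟨Metric.mem_ball.2 h2, h1⟩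
    apply Filter.Eventually.frequently
    filter_upwards [Ioo_mem_nhdsGT (lt_add_of_pos_right s hδpos)] with z hz
    obtain ⟨hsz, hzδ⟩ := hz
    have hst₀ : t₀ ≤ s := hs.1
    have hgood : ∀ τ ∈ Set.Icc s z,
        (∀ i, 0 < x s i → 0 < x τ i) ∧ (∀ i, x s i < 0 → x τ i < 0) ∧
        M * n * (∑ j, |x τ j - x s j|) ≤ η := by
      intro τ hτ
      refine hδ τ (hst₀.trans hτ.1) ?_
      rw [Real.dist_eq, abs_of_nonneg (by linarith [hτ.1])]
      linarith [hτ.2]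
    set F : Fin n → ℝ → ℝ := fun i τ => ((A τ).mulVec (x τ)) i with hFdef
    set g : Fin n → ℝ → ℝ := fun i τ =>
      if 0 < x s i then F i τ else if x s i < 0 then -F i τ else |F i τ| with hgdef
    have hgint : ∀ i, IntervalIntegrable (g i) volume s z := by
      intro i
      have hFi := hIIc s z i hst₀ hsz.le
      simp only [hgdef]
      split_ifs
      · exact hFi
      · exact hFi.neg
      · exact hFi.abs
    -- step 1 : per-component difference bound
    have h1 : ∀ i, |x z i| - |x s i| ≤ ∫ τ in s..z, g i τ := by
      intro i
      have heq := hxeq s z i hst₀ hsz.le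
      have hzS := hgood z ⟨hsz.le, le_rfl⟩
      by_cases hpos : 0 < x s i
      · have hxz : 0 < x z i := hzS.1 i hpos
        rw [abs_of_pos hxz, abs_of_pos hpos]
        have : g i = F i := by unfold g; simp [hpos]
        rw [this]
        have : (∫ τ in s..z, F i τ) = x z i - x s i := by rw [heq]; ring
        rw [this]
      · by_cases hneg : x s i < 0
        · have hxz : x z i < 0 := hzS.2.1 i hneg
          rw [abs_of_neg hxz, abs_of_neg hneg]
          have hg : g i = fun τ => -F i τ := by unfold g; simp [hpos, hneg]
          rw [hg, intervalIntegral.integral_neg]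
          have : (∫ τ in s..z, F i τ) = x z i - x s i := by rw [heq]; ring
          rw [this]; ring_nf; exact le_rfl
        · have h0 : x s i = 0 := le_antisymm (not_lt.1 hpos) (not_lt.1 hneg)
          have hg : g i = fun τ => |F i τ| := by unfold g; simp [hpos, hneg]
          rw [h0, abs_zero, sub_zero, hg]
          have hxz : x z i = ∫ τ in s..z, F i τ := by rw [heq, h0, zero_add]
          calc |x z i| = |∫ τ in s..z, F i τ| := by rw [hxz]
            _ ≤ ∫ τ in s..z, |F i τ| := intervalIntegral.abs_integral_le_integral_abs hsz.le
    have hsum1 : V z - V s ≤ ∫ τ in s..z, ∑ i, g i τ := by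
      rw [intervalIntegral.integral_finset_sum (fun i _ => hgint i)]
      calc V z - V s = ∑ i, (|x z i| - |x s i|) := by
            unfold V; rw [Finset.sum_sub_distrib]
        _ ≤ ∑ i, ∫ τ in s..z, g i τ := Finset.sum_le_sum fun i _ => h1 i
    -- step 2 : a.e. bound on the integrand
    have h2 : (fun τ => ∑ i, g i τ) ≤ᵐ[volume.restrict (Set.Icc s z)]
        fun _ => -c * V s + η := by
      filter_upwards [ae_restrict_of_ae (s := Set.Icc s z) hμ,
        ae_restrict_mem measurableSet_Icc] with τ hμτ hτ
      have ht₀τ : t₀ ≤ τ := hst₀.trans hτ.1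
      obtain ⟨hsgn₁, hsgn₂, herr⟩ := hgood τ hτ
      specialize hμτ ht₀τ
      set D : ℝ := ∑ j, |x τ j - x s j| with hDdef
      have hFapp : ∀ i, F i τ = ∑ j, A τ i j * x τ j := by
        intro i; simp [hFdef, Matrix.mulVec, dotProduct]
      set F0 : Fin n → ℝ := fun i => ∑ j, A τ i j * x s j with hF0def
      have hdiff : ∀ i, |F i τ - F0 i| ≤ M * D := by
        intro i
        rw [hFapp i]
        unfold F0 D
        rw [← Finset.sum_sub_distrib]
        calc |∑ j, (A τ i j * x τ j - A τ i j * x s j)|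
            ≤ ∑ j, |A τ i j * x τ j - A τ i j * x s j| := Finset.abs_sum_le_sum_abs _ _
          _ ≤ ∑ j, M * |x τ j - x s j| := by
              refine Finset.sum_le_sum fun j _ => ?_
              rw [← mul_sub, abs_mul]
              exact mul_le_mul_of_nonneg_right (hAM τ i j) (abs_nonneg _)
          _ = M * ∑ j, |x τ j - x s j| := by rw [Finset.mul_sum]
      set R : Fin n → ℝ := fun i =>
        A τ i i * |x s i| + ∑ j ∈ Finset.univ.erase i, |A τ i j| * |x s j| with hRdef
      have hg0 : ∀ i, g i τ ≤ R i + M * D := by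
        intro i
        have habs := hdiff i
        have habs1 : F i τ ≤ F0 i + M * D := by
          have := le_abs_self (F i τ - F0 i); linarith
        have habs2 : -F i τ ≤ -F0 i + M * D := by
          have := neg_le_abs (F i τ - F0 i); linarith
        have habs3 : |F i τ| ≤ |F0 i| + M * D := by
          have := abs_sub_abs_le_abs_sub (F i τ) (F0 i); linarith
        have hRpos : ∀ (σ : ℝ), σ = 1 ∨ σ = -1 → σ * x s i = |x s i| → σ * F0 i ≤ R i := by
          intro σ hσ hσx
          have hdiag : σ * (A τ i i * x s i) = A τ i i * |x s i| := by rw [← hσx]; ring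
          calc σ * F0 i
              = σ * (A τ i i * x s i) + ∑ j ∈ Finset.univ.erase i, σ * (A τ i j * x s j) := by
                simp only [hF0def]
                rw [← Finset.add_sum_erase _ (fun j => A τ i j * x s j) (Finset.mem_univ i),
                  mul_add, Finset.mul_sum]
            _ ≤ A τ i i * |x s i| + ∑ j ∈ Finset.univ.erase i, |A τ i j| * |x s j| := by
                rw [hdiag]
                refine add_le_add le_rfl (Finset.sum_le_sum fun j hj => ?_)
                calc σ * (A τ i j * x s j) ≤ |σ * (A τ i j * x s j)| := le_abs_self _
                  _ = |A τ i j| * |x s j| := by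
                      rcases hσ with h | h <;> rw [h] <;> simp [abs_mul]
            _ = R i := rfl
        simp only [hgdef]
        split_ifs with hpos hneg
        · have := hRpos 1 (Or.inl rfl) (by rw [one_mul, abs_of_pos hpos])
          rw [one_mul] at this; linarith
        · have := hRpos (-1) (Or.inr rfl) (by rw [neg_one_mul, abs_of_neg hneg])
          rw [neg_one_mul] at this; linarith
        · have h0 : x s i = 0 := le_antisymm (not_lt.1 hpos) (not_lt.1 hneg)
          have : |F0 i| ≤ R i := by
            unfold R F0
            calc |∑ j, A τ i j * x s j| ≤ ∑ j, |A τ i j * x s j| :=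
                  Finset.abs_sum_le_sum_abs _ _
              _ = ∑ j, |A τ i j| * |x s j| := by simp [abs_mul]
              _ = |A τ i i| * |x s i| + ∑ j ∈ Finset.univ.erase i, |A τ i j| * |x s j| :=
                  (Finset.add_sum_erase _ _ (Finset.mem_univ i)).symm
              _ = A τ i i * |x s i| + ∑ j ∈ Finset.univ.erase i, |A τ i j| * |x s j| := by
                  rw [h0]; simp
          linarith
      -- sum the bounds
      have hswap : ∑ i, ∑ j ∈ Finset.univ.erase i, |A τ i j| * |x s j|
          = ∑ j, ∑ i ∈ Finset.univ.erase j, |A τ i j| * |x s j| := by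
        have e1 : ∀ i : Fin n, ∑ j ∈ Finset.univ.erase i, |A τ i j| * |x s j|
            = (∑ j, |A τ i j| * |x s j|) - |A τ i i| * |x s i| :=
          fun i => Finset.sum_erase_eq_sub (Finset.mem_univ i)
        have e2 : ∀ j : Fin n, ∑ i ∈ Finset.univ.erase j, |A τ i j| * |x s j|
            = (∑ i, |A τ i j| * |x s j|) - |A τ j j| * |x s j| :=
          fun j => Finset.sum_erase_eq_sub (Finset.mem_univ j)
        simp only [e1, e2, Finset.sum_sub_distrib]
        rw [Finset.sum_comm]
      have hRsum : ∑ i, R i ≤ -c * V s := by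
        unfold R
        rw [Finset.sum_add_distrib, hswap]
        have : ∑ i, A τ i i * |x s i| = ∑ j, A τ j j * |x s j| := rfl
        rw [this, ← Finset.sum_add_distrib]
        calc ∑ j, (A τ j j * |x s j| + ∑ i ∈ Finset.univ.erase j, |A τ i j| * |x s j|)
            = ∑ j, (A τ j j + ∑ i ∈ Finset.univ.erase j, |A τ i j|) * |x s j| := by
              refine Finset.sum_congr rfl fun j _ => ?_
              rw [add_mul, Finset.sum_mul]
          _ ≤ ∑ j, -c * |x s j| := by
              refine Finset.sum_le_sum fun j _ => ?_
              exact mul_le_mul_of_nonneg_right (hμτ j) (abs_nonneg _)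
          _ = -c * V s := by rw [← Finset.mul_sum]
      calc ∑ i, g i τ ≤ ∑ i, (R i + M * D) := Finset.sum_le_sum fun i _ => hg0 i
        _ = (∑ i, R i) + n * (M * D) := by
            rw [Finset.sum_add_distrib, Finset.sum_const, Finset.card_univ, Fintype.card_fin,
              nsmul_eq_mul]
        _ ≤ -c * V s + η := by
            have : (n : ℝ) * (M * D) = M * n * D := by ring
            rw [this]
            exact add_le_add hRsum herr
    -- step 3 : integrate the bound
    have h3 : (∫ τ in s..z, ∑ i, g i τ) ≤ (z - s) * (-c * V s + η) := by
      have hGsum : IntervalIntegrable (fun τ => ∑ i, g i τ) volume s z := by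
        have h := IntervalIntegrable.sum (μ := volume) (a := s) (b := z) Finset.univ
          (fun i _ => hgint i)
        rwa [← Finset.sum_fn]
      have := intervalIntegral.integral_mono_ae_restrict hsz.le hGsum
        (intervalIntegrable_const) h2
      simpa only [intervalIntegral.integral_const, smul_eq_mul] using this
    have hzs : 0 < z - s := by linarith
    have : (z - s)⁻¹ * (V z - V s) ≤ -c * V s + η := by
      rw [inv_mul_le_iff₀ hzs]
      exact hsum1.trans h3
    exact lt_of_le_of_lt this hlt
  have hG := le_gronwallBound_of_liminf_deriv_right_le (f := V) (f' := fun s => -c * V s)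
    (δ := V t₀) (K := -c) (ε := 0) (a := t₀) (b := t)
    (hVc.mono Set.Icc_subset_Ici_self) key le_rfl
    (fun s _ => by simp)
  have := hG t ⟨ht, le_rfl⟩
  rwa [gronwallBound_ε0, mul_comm] at this
end
end

section
/- (Stability of arbitrarily switched linear systems, ℓ^∞ matrix measure.) Let A : ℝ → M_n(ℝ) be a measurable, bounded matrix-valued function, and let c > 0 be such that for almost every t ≥ t₀ and every row index i, A(t)_{ii} + Σ_{j ≠ i} |A(t)_{ij}| ≤ −c (i.e., the matrix measure induced by the ℓ^∞ vector norm satisfies μ_∞(A(t)) ≤ −c). Then every Caratheodory solution x of ẋ = A(t)x satisfies ‖x(t)‖_∞ ≤ e^{−c(t−t₀)} ‖x(t₀)‖_∞ for all t ≥ t₀, where ‖v‖_∞ = maxᵢ |vᵢ|; in particular all solutions converge to the origin. -/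
open MeasureTheory Matrix

noncomputable section

private lemma intervalIntegrable_of_bdd' {f : ℝ → ℝ} {C : ℝ} (hm : Measurable f)
    (hb : ∀ t, |f t| ≤ C) (a b : ℝ) : IntervalIntegrable f volume a b := by
  refine (intervalIntegrable_const (c := C)).mono_fun
    hm.aestronglyMeasurable.restrict ?_
  refine Filter.Eventually.of_forall fun t => ?_
  simp only [Real.norm_eq_abs]
  exact (hb t).trans (le_abs_self C)

set_option maxHeartbeats 1000000 in
/-- Stability of arbitrarily switched linear systems (`ℓ^∞` matrix measure):
if the measurable bounded matrix function `A(t)` has `ℓ^∞`-matrix measure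
`μ_∞(A(t)) = max_i (A(t)_{ii} + Σ_{j ≠ i} |A(t)_{ij}|) ≤ -c` for a.e. `t ≥ t₀`,
then every Caratheodory solution of `ẋ = A(t) x` decays exponentially to the
origin in the sup norm (the norm of `Fin n → ℝ`) with rate `c`. -/
theorem switched_linear_stability_muInf
    {n : ℕ}
    (A : ℝ → Matrix (Fin n) (Fin n) ℝ)
    (hmeas : ∀ i j, Measurable fun t => A t i j)
    (hbdd : ∃ M : ℝ, ∀ t i j, |A t i j| ≤ M)
    (t₀ c : ℝ) (hc : 0 < c)
    (hμ : ∀ᵐ t ∂(volume : Measure ℝ), t₀ ≤ t → ∀ i : Fin n,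
      A t i i + ∑ j ∈ Finset.univ.erase i, |A t i j| ≤ -c)
    (x : ℝ → Fin n → ℝ)
    (hx : IsCaratheodorySol (fun t z => (A t).mulVec z) t₀ x) :
    ∀ t, t₀ ≤ t → ‖x t‖ ≤ Real.exp (-c * (t - t₀)) * ‖x t₀‖ := by
  classical
  obtain ⟨hcont, hint⟩ := hx
  obtain ⟨M₀, hM₀⟩ := hbdd
  set M : ℝ := max M₀ 0 with hMdef
  have hM : ∀ t i j, |A t i j| ≤ M := fun t i j => (hM₀ t i j).trans (le_max_left _ _)
  have hM0 : (0:ℝ) ≤ M := le_max_right _ _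
  intro t ht
  have hfc : ContinuousOn (fun s => ‖x s‖) (Set.Icc t₀ t) :=
    (hcont.mono Set.Icc_subset_Ici_self).norm
  have key : ∀ s ∈ Set.Ico t₀ t, ∀ r, (fun s => -c * ‖x s‖) s < r →
      ∃ᶠ z in nhdsWithin s (Set.Ioi s), (z - s)⁻¹ * (‖x z‖ - ‖x s‖) < r := by
    intro s hs r hr
    apply Filter.Eventually.frequently
    have hs0 : t₀ ≤ s := hs.1
    simp only at hr
    have hP : (0:ℝ) < r + c * ‖x s‖ := by linarith
    set ε : ℝ := (r + c * ‖x s‖) / ((n : ℝ) * M + 1) with hεdef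
    have hε0 : 0 < ε := by positivity
    have hεP : (n : ℝ) * M * ε < r + c * ‖x s‖ := by
      have h1 : ((n:ℝ) * M + 1) * ε = r + c * ‖x s‖ := by
        rw [hεdef]; field_simp
      nlinarith [hε0]
    have hcs : ContinuousWithinAt x (Set.Ici t₀) s := hcont s hs0
    rw [Metric.continuousWithinAt_iff] at hcs
    obtain ⟨δ₁, hδ₁0, hδ₁⟩ := hcs ε hε0
    set δ : ℝ := min δ₁ (1 / (M + c + 1)) with hδdef
    have hδ0 : 0 < δ := lt_min hδ₁0 (by positivity)
    filter_upwards [Ioo_mem_nhdsGT (by linarith : s < s + δ)] with z hz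
    obtain ⟨hsz, hzδ⟩ := hz
    have hzs : (0:ℝ) < z - s := sub_pos.2 hsz
    have hzδ' : z - s < δ := by linarith
    have hzt0 : t₀ ≤ z := le_of_lt (lt_of_le_of_lt hs0 hsz)
    have hsmall : (M + c) * (z - s) ≤ 1 := by
      have h2 : z - s ≤ 1 / (M + c + 1) := le_of_lt (lt_of_lt_of_le hzδ' (min_le_right _ _))
      have h3 : (0:ℝ) < M + c + 1 := by positivity
      calc (M + c) * (z - s) ≤ (M + c) * (1 / (M + c + 1)) :=
            mul_le_mul_of_nonneg_left h2 (by positivity)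
        _ ≤ 1 := by rw [mul_one_div, div_le_one h3]; linarith
    have hclose : ∀ τ ∈ Set.uIoc s z, ‖x τ - x s‖ ≤ ε := by
      intro τ hτ
      rw [Set.uIoc_of_le (le_of_lt hsz)] at hτ
      have hτ1 : t₀ ≤ τ := le_trans hs0 (le_of_lt hτ.1)
      have hd : dist τ s < δ₁ := by
        rw [Real.dist_eq, abs_of_nonneg (by linarith [hτ.1.le] : (0:ℝ) ≤ τ - s)]
        have hd2 : δ ≤ δ₁ := min_le_left _ _
        have := hτ.2
        linarith
      have := hδ₁ (Set.mem_Ici.2 hτ1) hd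
      rw [dist_eq_norm] at this
      exact this.le
    -- integrability
    have hIa : ∀ i j, IntervalIntegrable (fun τ => A τ i j) volume s z :=
      fun i j => intervalIntegrable_of_bdd' (hmeas i j) (fun τ => hM τ i j) s z
    have hIaabs : ∀ i j, IntervalIntegrable (fun τ => |A τ i j|) volume s z :=
      fun i j => intervalIntegrable_of_bdd' (hmeas i j).abs
        (fun τ => by rw [abs_abs]; exact hM τ i j) s z
    have hIfull_z := (hint z hzt0).1
    have hIfull_s := (hint s hs0).1
    have hIf : IntervalIntegrable (fun τ => (A τ).mulVec (x τ)) volume s z :=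
      hIfull_z.mono_set (by
        rw [Set.uIcc_of_le (le_of_lt hsz), Set.uIcc_of_le hzt0]
        exact Set.Icc_subset_Icc hs0 le_rfl)
    have hxz : x z - x s = ∫ τ in s..z, (A τ).mulVec (x τ) := by
      rw [(hint z hzt0).2, (hint s hs0).2, add_sub_add_left_eq_sub]
      exact intervalIntegral.integral_interval_sub_left hIfull_z hIfull_s
    have hIi : ∀ i, IntervalIntegrable (fun τ => (A τ).mulVec (x τ) i) volume s z := by
      intro i
      exact ⟨(ContinuousLinearMap.proj (R := ℝ) (φ := fun _ : Fin n => ℝ) i).integrable_comp hIf.1,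
        (ContinuousLinearMap.proj (R := ℝ) (φ := fun _ : Fin n => ℝ) i).integrable_comp hIf.2⟩
    have hcomp : ∀ i, x z i = x s i + ∫ τ in s..z, (A τ).mulVec (x τ) i := by
      intro i
      have h1 : (x z - x s) i = (∫ τ in s..z, (A τ).mulVec (x τ)) i := by rw [hxz]
      have h2 : (∫ τ in s..z, ((A τ).mulVec (x τ)) i)
          = (∫ τ in s..z, (A τ).mulVec (x τ)) i := by
        have := (ContinuousLinearMap.proj (R := ℝ) (φ := fun _ : Fin n => ℝ)
          i).intervalIntegral_comp_comm hIf
        simpa using this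
      rw [Pi.sub_apply] at h1
      rw [h2]
      linarith
    have hmeasG : ∀ i, Measurable (fun τ => (A τ).mulVec (x s) i) := by
      intro i
      simp only [Matrix.mulVec, dotProduct]
      exact Finset.measurable_sum _ fun j _ => (hmeas i j).mul_const _
    have hGbd : ∀ i τ, |(A τ).mulVec (x s) i| ≤ (n:ℝ) * M * ‖x s‖ := by
      intro i τ
      simp only [Matrix.mulVec, dotProduct]
      calc |∑ j, A τ i j * x s j| ≤ ∑ j, |A τ i j * x s j| := Finset.abs_sum_le_sum_abs _ _
        _ ≤ ∑ _j : Fin n, M * ‖x s‖ := by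
            refine Finset.sum_le_sum fun j _ => ?_
            rw [abs_mul]
            exact mul_le_mul (hM τ i j)
              (by simpa [Real.norm_eq_abs] using norm_le_pi_norm (x s) j)
              (abs_nonneg _) hM0
        _ = (n:ℝ) * M * ‖x s‖ := by
            rw [Finset.sum_const, Finset.card_univ, Fintype.card_fin, nsmul_eq_mul]; ring
    have hIG : ∀ i, IntervalIntegrable (fun τ => (A τ).mulVec (x s) i) volume s z :=
      fun i => intervalIntegrable_of_bdd' (hmeasG i) (hGbd i) s z
    -- main term bound
    have hmain : ∀ i, |x s i + ∫ τ in s..z, (A τ).mulVec (x s) i|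
        ≤ ‖x s‖ * (1 - c * (z - s)) := by
      intro i
      have hsum : (∫ τ in s..z, (A τ).mulVec (x s) i)
          = ∑ j, (∫ τ in s..z, A τ i j) * x s j := by
        simp only [Matrix.mulVec, dotProduct]
        rw [intervalIntegral.integral_finset_sum (fun j _ => (hIa i j).mul_const _)]
        exact Finset.sum_congr rfl fun j _ => intervalIntegral.integral_mul_const _ _
      set g : Fin n → ℝ := fun j => ∫ τ in s..z, A τ i j with hgdef
      have hgabs : ∀ j, |g j| ≤ ∫ τ in s..z, |A τ i j| := fun j =>
        intervalIntegral.abs_integral_le_integral_abs (le_of_lt hsz)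
      have hgi_lb : -(1:ℝ) ≤ g i := by
        have habs : ‖∫ τ in s..z, A τ i i‖ ≤ M * |z - s| := by
          refine intervalIntegral.norm_integral_le_of_norm_le_const fun τ _ => ?_
          simpa [Real.norm_eq_abs] using hM τ i i
        rw [Real.norm_eq_abs, abs_of_pos hzs] at habs
        have h4 := (abs_le.1 habs).1
        nlinarith [hzs.le, hc.le]
      -- row integral bound
      have hIsum : IntervalIntegrable
          (fun τ => ∑ j ∈ Finset.univ.erase i, |A τ i j|) volume s z := by
        refine intervalIntegrable_of_bdd' (C := (n:ℝ) * M)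
          (Finset.measurable_sum _ fun j _ => (hmeas i j).abs) (fun τ => ?_) s z
        rw [abs_of_nonneg (Finset.sum_nonneg fun j _ => abs_nonneg _)]
        have hcard : ((Finset.univ.erase i).card : ℝ) ≤ (n:ℝ) := by
          exact_mod_cast (Finset.card_le_card (Finset.subset_univ _)).trans (le_of_eq (by simp))
        calc ∑ j ∈ Finset.univ.erase i, |A τ i j|
            ≤ ∑ _j ∈ Finset.univ.erase i, M := Finset.sum_le_sum fun j _ => hM τ i j
          _ = ((Finset.univ.erase i).card : ℝ) * M := by
              rw [Finset.sum_const, nsmul_eq_mul]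
          _ ≤ (n:ℝ) * M := mul_le_mul_of_nonneg_right hcard hM0
      have hIrow : IntervalIntegrable
          (fun τ => A τ i i + ∑ j ∈ Finset.univ.erase i, |A τ i j|) volume s z :=
        (hIa i i).add hIsum
      have hrow : (∫ τ in s..z, (A τ i i + ∑ j ∈ Finset.univ.erase i, |A τ i j|))
          ≤ -c * (z - s) := by
        have hae : (fun τ => A τ i i + ∑ j ∈ Finset.univ.erase i, |A τ i j|)
            ≤ᵐ[volume.restrict (Set.Icc s z)] fun _ => -c := by
          have h1 : ∀ᵐ τ ∂(volume.restrict (Set.Icc s z)), t₀ ≤ τ → ∀ i : Fin n,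
              A τ i i + ∑ j ∈ Finset.univ.erase i, |A τ i j| ≤ -c := ae_restrict_of_ae hμ
          have h2 : ∀ᵐ τ ∂(volume.restrict (Set.Icc s z)), τ ∈ Set.Icc s z :=
            ae_restrict_mem measurableSet_Icc
          filter_upwards [h1, h2] with τ hτ1 hτ2
          exact hτ1 (le_trans hs0 hτ2.1) i
        calc (∫ τ in s..z, (A τ i i + ∑ j ∈ Finset.univ.erase i, |A τ i j|))
            ≤ ∫ _τ in s..z, (-c : ℝ) :=
              intervalIntegral.integral_mono_ae_restrict (le_of_lt hsz) hIrow
                intervalIntegrable_const hae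
          _ = -c * (z - s) := by
              rw [intervalIntegral.integral_const, smul_eq_mul]; ring
      calc |x s i + ∫ τ in s..z, (A τ).mulVec (x s) i|
          = |x s i * (1 + g i) + ∑ j ∈ Finset.univ.erase i, g j * x s j| := by
            rw [hsum, ← Finset.add_sum_erase _ (fun j => g j * x s j) (Finset.mem_univ i)]
            congr 1
            ring
        _ ≤ |x s i * (1 + g i)| + |∑ j ∈ Finset.univ.erase i, g j * x s j| := abs_add_le _ _
        _ ≤ ‖x s‖ * (1 + g i)
            + ∑ j ∈ Finset.univ.erase i, (∫ τ in s..z, |A τ i j|) * ‖x s‖ := by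
            refine add_le_add ?_ ?_
            · rw [abs_mul, abs_of_nonneg (by linarith : (0:ℝ) ≤ 1 + g i)]
              exact mul_le_mul_of_nonneg_right
                (by simpa [Real.norm_eq_abs] using norm_le_pi_norm (x s) i) (by linarith)
            · refine le_trans (Finset.abs_sum_le_sum_abs _ _) (Finset.sum_le_sum ?_)
              intro j _
              rw [abs_mul]
              exact mul_le_mul (hgabs j)
                (by simpa [Real.norm_eq_abs] using norm_le_pi_norm (x s) j)
                (abs_nonneg _)
                (intervalIntegral.integral_nonneg (le_of_lt hsz) fun τ _ => abs_nonneg _)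
        _ = ‖x s‖ * (1 + ((∫ τ in s..z, A τ i i)
              + ∑ j ∈ Finset.univ.erase i, ∫ τ in s..z, |A τ i j|)) := by
            rw [← Finset.sum_mul]
            ring
        _ = ‖x s‖ * (1 + ∫ τ in s..z,
              (A τ i i + ∑ j ∈ Finset.univ.erase i, |A τ i j|)) := by
            rw [intervalIntegral.integral_add (hIa i i) hIsum,
              intervalIntegral.integral_finset_sum (fun j _ => hIaabs i j)]
        _ ≤ ‖x s‖ * (1 + -c * (z - s)) :=
            mul_le_mul_of_nonneg_left (by linarith [hrow]) (norm_nonneg _)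
        _ = ‖x s‖ * (1 - c * (z - s)) := by ring
    -- error term bound
    have herr : ∀ i, |∫ τ in s..z, ((A τ).mulVec (x τ) i - (A τ).mulVec (x s) i)|
        ≤ (n:ℝ) * M * ε * (z - s) := by
      intro i
      have hb : ∀ τ ∈ Set.uIoc s z,
          ‖(A τ).mulVec (x τ) i - (A τ).mulVec (x s) i‖ ≤ (n:ℝ) * M * ε := by
        intro τ hτ
        have h1 : (A τ).mulVec (x τ) i - (A τ).mulVec (x s) i
            = ∑ j, A τ i j * (x τ j - x s j) := by
          simp [Matrix.mulVec, dotProduct, mul_sub, Finset.sum_sub_distrib]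
        rw [Real.norm_eq_abs, h1]
        calc |∑ j, A τ i j * (x τ j - x s j)|
            ≤ ∑ j, |A τ i j * (x τ j - x s j)| := Finset.abs_sum_le_sum_abs _ _
          _ ≤ ∑ _j : Fin n, M * ε := by
              refine Finset.sum_le_sum fun j _ => ?_
              rw [abs_mul]
              refine mul_le_mul (hM τ i j) ?_ (abs_nonneg _) hM0
              calc |x τ j - x s j| = ‖(x τ - x s) j‖ := by
                    rw [Pi.sub_apply, Real.norm_eq_abs]
                _ ≤ ‖x τ - x s‖ := norm_le_pi_norm _ j
                _ ≤ ε := hclose τ hτ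
          _ = (n:ℝ) * M * ε := by
              rw [Finset.sum_const, Finset.card_univ, Fintype.card_fin, nsmul_eq_mul]; ring
      have h2 := intervalIntegral.norm_integral_le_of_norm_le_const hb
      rw [Real.norm_eq_abs] at h2
      rw [abs_of_pos hzs] at h2
      linarith [h2]
    -- combine
    have hc1 : c * (z - s) ≤ 1 := by nlinarith [hsmall, hzs.le]
    have hRnn : 0 ≤ ‖x s‖ * (1 - c * (z - s)) + (n:ℝ) * M * ε * (z - s) := by
      have h1 : (0:ℝ) ≤ 1 - c * (z - s) := by linarith
      have h2 : (0:ℝ) ≤ (n:ℝ) * M * ε * (z - s) := by positivity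
      have h3 := mul_nonneg (norm_nonneg (x s)) h1
      linarith
    have hnorm : ‖x z‖ ≤ ‖x s‖ * (1 - c * (z - s)) + (n:ℝ) * M * ε * (z - s) := by
      rw [pi_norm_le_iff_of_nonneg hRnn]
      intro i
      have hsplit : x z i = (x s i + ∫ τ in s..z, (A τ).mulVec (x s) i)
          + ∫ τ in s..z, ((A τ).mulVec (x τ) i - (A τ).mulVec (x s) i) := by
        rw [hcomp i, intervalIntegral.integral_sub (hIi i) (hIG i)]
        ring
      rw [Real.norm_eq_abs, hsplit]
      calc |(x s i + ∫ τ in s..z, (A τ).mulVec (x s) i)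
            + ∫ τ in s..z, ((A τ).mulVec (x τ) i - (A τ).mulVec (x s) i)|
          ≤ |x s i + ∫ τ in s..z, (A τ).mulVec (x s) i|
            + |∫ τ in s..z, ((A τ).mulVec (x τ) i - (A τ).mulVec (x s) i)| := abs_add_le _ _
        _ ≤ ‖x s‖ * (1 - c * (z - s)) + (n:ℝ) * M * ε * (z - s) :=
            add_le_add (hmain i) (herr i)
    have hslope : (z - s)⁻¹ * (‖x z‖ - ‖x s‖) ≤ -c * ‖x s‖ + (n:ℝ) * M * ε := by
      rw [inv_mul_le_iff₀ hzs]
      nlinarith [hnorm]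
    linarith [hεP, hslope]
  have bound : ∀ s ∈ Set.Ico t₀ t, (fun s => -c * ‖x s‖) s ≤ -c * ‖x s‖ + 0 :=
    fun s _ => by simp
  have hg := le_gronwallBound_of_liminf_deriv_right_le (f := fun s => ‖x s‖)
    (f' := fun s => -c * ‖x s‖) (δ := ‖x t₀‖) (K := -c) (ε := 0)
    hfc key le_rfl bound t (Set.right_mem_Icc.2 ht)
  rwa [gronwallBound_ε0, mul_comm] at hg
end
end

section
/- Let L : ℝ × ℝⁿ → M_n(ℝ) be such that the map (t,x) ↦ L(t,x)x is continuous (e.g. a piecewise-smooth continuous system of the form ẋ = L(t,x)x), and suppose there is c > 0 such that for all t, all z ∈ ℝⁿ and all v ∈ ℝⁿ, vᵀ L(t,z) v ≤ −c‖v‖². Then every Caratheodory solution x of ẋ = L(t,x)x satisfies ‖x(t)‖ ≤ e^{−c(t−t₀)} ‖x(t₀)‖ for all t ≥ t₀; consequently all solutions converge exponentially to the origin and hence towards each other, even though the system itself need not be contracting. -/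
open scoped RealInnerProductSpace
open MeasureTheory

noncomputable section

/-- Partial contraction for systems of the form `ẋ = L(t, x) x`: if
`vᵀ L(t, z) v ≤ -c ‖v‖²` for all `t`, `z` and `v` (i.e. `μ₂(L(t, z)) ≤ -c`),
then every Caratheodory solution of `ẋ = L(t, x) x` decays exponentially to
the origin with rate `c`, even though the system itself need not be
contracting. -/
theorem partial_contraction_state_dependent_linear
    {n : ℕ}
    (L : ℝ → EuclideanSpace ℝ (Fin n) → Matrix (Fin n) (Fin n) ℝ)
    (hcont : Continuous fun p : ℝ × EuclideanSpace ℝ (Fin n) =>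
      Matrix.toEuclideanLin (L p.1 p.2) p.2)
    (c : ℝ) (hc : 0 < c)
    (hμ : ∀ (t : ℝ) (z : EuclideanSpace ℝ (Fin n)) (v : EuclideanSpace ℝ (Fin n)),
      ⟪Matrix.toEuclideanLin (L t z) v, v⟫ ≤ -c * ‖v‖ ^ 2)
    (t₀ : ℝ) (x : ℝ → EuclideanSpace ℝ (Fin n))
    (hx : IsCaratheodorySol (fun t z => Matrix.toEuclideanLin (L t z) z) t₀ x) :
    ∀ t, t₀ ≤ t → ‖x t‖ ≤ Real.exp (-c * (t - t₀)) * ‖x t₀‖ := by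
  obtain ⟨hxc, hxi⟩ := hx
  set g : ℝ → EuclideanSpace ℝ (Fin n) → EuclideanSpace ℝ (Fin n) :=
    fun t z => Matrix.toEuclideanLin (L t z) z with hg
  set h : ℝ → EuclideanSpace ℝ (Fin n) := fun τ => g τ (x τ) with hh
  have hpx : ContinuousOn (fun τ => (τ, x τ)) (Set.Ici t₀) :=
    continuousOn_id.prodMk hxc
  have h1 := hcont.comp_continuousOn hpx
  simp only [Function.comp_def] at h1
  have hhcont : ContinuousOn h (Set.Ici t₀) := h1
  -- x is differentiable at interior points
  have hxd : ∀ t ∈ Set.Ioi t₀, HasDerivAt x (h t) t := by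
    intro t ht
    have htmem : Set.Ici t₀ ∈ nhds t := Ici_mem_nhds ht
    have hF : HasDerivAt (fun u => ∫ τ in t₀..u, h τ) (h t) t :=
      intervalIntegral.integral_hasDerivAt_right (hxi t (le_of_lt ht)).1
        ⟨Set.Ioi t₀, Ioi_mem_nhds ht,
          ((hhcont.mono Set.Ioi_subset_Ici_self).aestronglyMeasurable measurableSet_Ioi)⟩
        (hhcont.continuousAt htmem)
    refine (hF.const_add (x t₀)).congr_of_eventuallyEq ?_
    filter_upwards [htmem] with u hu
    exact (hxi u hu).2
  -- Lyapunov function u τ = exp(2c(τ-t₀)) * ⟪x τ, x τ⟫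
  set u : ℝ → ℝ := fun τ => Real.exp (2*c*(τ - t₀)) * ⟪x τ, x τ⟫ with hu
  have hucont : ContinuousOn u (Set.Ici t₀) := by
    rw [hu]
    exact (Real.continuous_exp.comp (by continuity)).continuousOn.mul (hxc.inner hxc)
  have hud : ∀ t ∈ Set.Ioi t₀, HasDerivAt u
      (2*c*Real.exp (2*c*(t - t₀)) * ⟪x t, x t⟫
        + Real.exp (2*c*(t - t₀)) * (⟪x t, h t⟫ + ⟪h t, x t⟫)) t := by
    intro t ht
    have hinner : HasDerivAt (fun τ => ⟪x τ, x τ⟫) (⟪x t, h t⟫ + ⟪h t, x t⟫) t :=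
      (hxd t ht).inner ℝ (hxd t ht)
    have hexp : HasDerivAt (fun τ => Real.exp (2*c*(τ - t₀))) (2*c*Real.exp (2*c*(t - t₀))) t := by
      have h0 : HasDerivAt (fun τ : ℝ => 2*c*(τ - t₀)) (2*c) t := by
        simpa using ((hasDerivAt_id t).sub_const t₀).const_mul (2*c)
      simpa [mul_comm] using h0.exp
    rw [hu]
    convert hexp.fun_mul hinner using 1
  have hderiv_nonpos : ∀ t ∈ Set.Ioi t₀, deriv u t ≤ 0 := by
    intro t ht
    rw [(hud t ht).deriv]
    have hμ' : ⟪h t, x t⟫ ≤ -c * ‖x t‖ ^ 2 := hμ t (x t) (x t)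
    have hcomm : ⟪x t, h t⟫ = ⟪h t, x t⟫ := real_inner_comm _ _
    have hself : ⟪x t, x t⟫ = ‖x t‖ ^ 2 := real_inner_self_eq_norm_sq (x t)
    have hexppos : (0:ℝ) < Real.exp (2*c*(t - t₀)) := Real.exp_pos _
    rw [hcomm, hself]
    nlinarith [mul_le_mul_of_nonneg_left hμ' hexppos.le]
  have hanti : AntitoneOn u (Set.Ici t₀) := by
    refine antitoneOn_of_deriv_nonpos (convex_Ici t₀) hucont ?_ ?_
    · intro t ht
      rw [interior_Ici] at ht
      exact ((hud t ht).differentiableAt.differentiableWithinAt)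
    · intro t ht
      rw [interior_Ici] at ht
      exact hderiv_nonpos t ht
  -- conclusion
  intro t ht
  have hle : u t ≤ u t₀ := hanti Set.self_mem_Ici ht ht
  rw [hu] at hle
  simp only [sub_self, mul_zero, Real.exp_zero, one_mul] at hle
  rw [real_inner_self_eq_norm_sq, real_inner_self_eq_norm_sq] at hle
  set E : ℝ := Real.exp (c*(t - t₀)) with hE
  have hEpos : (0:ℝ) < E := Real.exp_pos _
  have hE2 : Real.exp (2*c*(t - t₀)) = E^2 := by
    rw [hE, sq, ← Real.exp_add]; congr 1; ring
  have hEinv : Real.exp (-c*(t - t₀)) = E⁻¹ := by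
    rw [hE, ← Real.exp_neg]; congr 1; ring
  rw [hE2] at hle
  rw [hEinv]
  have key : E * ‖x t‖ ≤ ‖x t₀‖ := by
    nlinarith [norm_nonneg (x t), norm_nonneg (x t₀), mul_pos hEpos hEpos]
  calc ‖x t‖ = E⁻¹ * (E * ‖x t‖) := by field_simp
    _ ≤ E⁻¹ * ‖x t₀‖ := by
        apply mul_le_mul_of_nonneg_left key (le_of_lt (inv_pos.mpr hEpos))
end
end

section
/- A subset C of ℝⁿ is convex if and only if it is 1-reachable, i.e., if and only if for any two points x₀, y₀ ∈ C there exists a continuously differentiable curve γ : [0,1] → C with γ(0) = x₀, γ(1) = y₀, and ‖γ'(r)‖ ≤ ‖y₀ − x₀‖ for all r ∈ [0,1]. -/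
noncomputable section

/-- A subset of `ℝⁿ` is convex if and only if it is `1`-reachable. -/
theorem convex_iff_one_reachable
    {n : ℕ} (C : Set (EuclideanSpace ℝ (Fin n))) :
    Convex ℝ C ↔ KReachable 1 C := by
  constructor
  · -- convex → 1-reachable: use the straight segment
    intro hC x₀ hx₀ y₀ hy₀
    refine ⟨fun r => x₀ + r • (y₀ - x₀), ?_, ?_, by simp, by simp, ?_⟩
    · exact (contDiff_const.add (contDiff_id.smul contDiff_const)).contDiffOn
    · intro r hr
      exact hC.add_smul_sub_mem hx₀ hy₀ hr
    · intro r hr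
      have hd : HasDerivAt (fun r : ℝ => x₀ + r • (y₀ - x₀)) (y₀ - x₀) r := by
        simpa using ((hasDerivAt_id r).smul_const (y₀ - x₀)).const_add x₀
      rw [(hd.hasDerivWithinAt).derivWithin ((uniqueDiffOn_Icc one_pos) r hr)]
      simp
  · -- 1-reachable → convex
    intro h x hx y hy a b ha hb hab
    obtain ⟨γ, hγsm, hγmem, hγ0, hγ1, hγd⟩ := h x hx y hy
    by_cases hxy : y = x
    · have hxx : a • x + b • y = x := by rw [hxy, ← add_smul, hab, one_smul]
      rw [hxx]; exact hx
    have Lpos : (0 : ℝ) < ‖y - x‖ := by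
      simpa [sub_eq_zero] using hxy
    have hdiff : DifferentiableOn ℝ γ (Set.Icc 0 1) := hγsm.differentiableOn one_ne_zero
    have hlip : ∀ s ∈ Set.Icc (0:ℝ) 1, ∀ t ∈ Set.Icc (0:ℝ) 1,
        ‖γ t - γ s‖ ≤ ‖y - x‖ * ‖t - s‖ := by
      intro s hs t ht
      exact Convex.norm_image_sub_le_of_norm_derivWithin_le hdiff
        (fun r hr => by simpa using hγd r hr) (convex_Icc 0 1) hs ht
    -- every point on the curve lies on the segment [x, y]
    have key : ∀ t ∈ Set.Icc (0:ℝ) 1, ∃ c : ℝ, γ t = x + c • (y - x) := by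
      intro t ht
      obtain ⟨ht0, ht1⟩ := ht
      have h1 : ‖γ t - x‖ ≤ ‖y - x‖ * t := by
        have := hlip 0 (by norm_num) t ⟨ht0, ht1⟩
        simpa [hγ0, abs_of_nonneg ht0] using this
      have h2 : ‖y - γ t‖ ≤ ‖y - x‖ * (1 - t) := by
        have := hlip t ⟨ht0, ht1⟩ 1 (by norm_num)
        simpa [hγ1, abs_of_nonneg (by linarith : (0:ℝ) ≤ 1 - t)] using this
      have hsum : (γ t - x) + (y - γ t) = y - x := by abel
      have heq : ‖(γ t - x) + (y - γ t)‖ = ‖γ t - x‖ + ‖y - γ t‖ := by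
        refine le_antisymm (norm_add_le _ _) ?_
        rw [hsum]
        calc ‖γ t - x‖ + ‖y - γ t‖ ≤ ‖y - x‖ * t + ‖y - x‖ * (1 - t) := by linarith
        _ = ‖y - x‖ := by ring
      obtain ⟨c, d, hc, hd, hcd, h1', _⟩ :=
        (sameRay_iff_norm_add.mpr heq).exists_eq_smul_add
      rw [hsum] at h1'
      exact ⟨c, by rw [← h1']; abel⟩
    -- intermediate value theorem to hit the prescribed segment point
    set f : ℝ → ℝ := fun t => inner (𝕜 := ℝ) (y - x) (γ t - x) with hf
    have hfc : ContinuousOn f (Set.Icc 0 1) :=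
      continuousOn_const.inner ((hγsm.continuousOn).sub continuousOn_const)
    have hf0 : f 0 = 0 := by simp only [hf, hγ0, sub_self, inner_zero_right]
    have hf1 : f 1 = ‖y - x‖ ^ 2 := by
      simp only [hf, hγ1]
      exact real_inner_self_eq_norm_sq _
    have hmem : b * ‖y - x‖ ^ 2 ∈ Set.Icc (f 0) (f 1) := by
      rw [hf0, hf1]
      constructor
      · positivity
      · nlinarith [sq_nonneg ‖y - x‖]
    obtain ⟨t, ht, hft⟩ := intermediate_value_Icc zero_le_one hfc hmem
    obtain ⟨c, hcγ⟩ := key t ht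
    have hfc' : f t = c * ‖y - x‖ ^ 2 := by
      simp only [hf, hcγ, add_sub_cancel_left, real_inner_smul_right,
        real_inner_self_eq_norm_sq]
    have hcb : c = b := by
      have h2 : c * ‖y - x‖ ^ 2 = b * ‖y - x‖ ^ 2 := by rw [← hfc', hft]
      have : (0:ℝ) < ‖y - x‖ ^ 2 := by positivity
      exact mul_right_cancel₀ (ne_of_gt this) h2
    have : a • x + b • y = γ t := by
      rw [hcγ, hcb]
      have hab' : a = 1 - b := by linarith
      rw [hab']; module
    rw [this]
    exact hγmem t ht
end
end

section
/- (Incremental stability of the switched transcriptional module.) Fix positive parameters k₁, k₂, δ, β, h, e_T, X_tot and a continuous input u : ℝ → ℝ with u(t) ≥ u_min > 0 for all t. Consider the planar switched system in the variables (x_t, y): ẋ_t = u(t)(X_tot − x_t) − δ x_t + δ y + ṽ(x_t, y), ẏ = −k₁ y + k₂ (e_T − y)(x_t − y), where ṽ(x_t, y) = 0 if x_t − y ≤ h and ṽ(x_t, y) = −β (x_t − y − h) if x_t − y > h. Let D := { (x_t, y) ∈ ℝ² : y ≤ e_T and y ≤ x_t } (a convex set) and set c := min(u_min, k₁). Then for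 any two Caratheodory solutions z₁ = (x_{t,1}, y₁) and z₂ = (x_{t,2}, y₂) that remain in D on [t₀, t], one has ‖z₁(t) − z₂(t)‖_∞ ≤ e^{−c(t−t₀)} ‖z₁(t₀) − z₂(t₀)‖_∞, where ‖(a,b)‖_∞ = max(|a|, |b|); i.e., the switched system is incrementally exponentially stable on D. -/
open MeasureTheory

noncomputable section

/-- One component of the sup-norm matrix-measure estimate: if `G = a * p + b * q`
with `b ≥ 0` and `a + b ≤ -c`, then for small `h ≥ 0` the Euler step contracts. -/
lemma abs_comp_bound (p q G a b c h : ℝ) (hG : G = a * p + b * q)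
    (hb : 0 ≤ b) (hab : a + b ≤ -c) (hh : 0 ≤ h) (hha : h * (-a) ≤ 1) :
    |p + h * G| ≤ (1 - c * h) * max |p| |q| := by
  set M := max |p| |q| with hM
  have hp : |p| ≤ M := le_max_left _ _
  have hq : |q| ≤ M := le_max_right _ _
  have hM0 : 0 ≤ M := le_trans (abs_nonneg p) hp
  have h1 : 0 ≤ 1 + h * a := by nlinarith
  have e1 : p + h * G = (1 + h * a) * p + (h * b) * q := by rw [hG]; ring
  rw [e1]
  calc |(1 + h * a) * p + (h * b) * q| ≤ |(1 + h * a) * p| + |(h * b) * q| := abs_add_le _ _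
    _ = (1 + h * a) * |p| + (h * b) * |q| := by
        rw [abs_mul, abs_mul, abs_of_nonneg h1, abs_of_nonneg (mul_nonneg hh hb)]
    _ ≤ (1 + h * a) * M + (h * b) * M :=
        add_le_add (mul_le_mul_of_nonneg_left hp h1)
          (mul_le_mul_of_nonneg_left hq (mul_nonneg hh hb))
    _ = (1 + h * (a + b)) * M := by ring
    _ ≤ (1 - c * h) * M := by
        have h2 : h * (a + b) ≤ h * (-c) := mul_le_mul_of_nonneg_left hab hh
        have h3 : 1 + h * (a + b) ≤ 1 - c * h := by nlinarith
        exact mul_le_mul_of_nonneg_right h3 hM0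

/-- Sector property of the switching nonlinearity `ṽ`. -/
lemma sector_bound (β hth : ℝ) (hβ : 0 < β) (d₁ d₂ : ℝ) :
    ∃ κ, 0 ≤ κ ∧ κ ≤ β ∧
      (if d₁ ≤ hth then (0 : ℝ) else -β * (d₁ - hth)) -
        (if d₂ ≤ hth then (0 : ℝ) else -β * (d₂ - hth)) = -κ * (d₁ - d₂) := by
  split_ifs with h1 h2 h2
  · exact ⟨0, le_refl 0, hβ.le, by ring⟩
  · push_neg at h2
    have hd : 0 < d₂ - d₁ := by linarith
    have hne : d₂ - d₁ ≠ 0 := hd.ne'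
    refine ⟨β * (d₂ - hth) / (d₂ - d₁), div_nonneg (by nlinarith) hd.le, ?_, ?_⟩
    · rw [div_le_iff₀ hd]; nlinarith
    · field_simp; ring
  · push_neg at h1
    have hd : 0 < d₁ - d₂ := by linarith
    have hne : d₁ - d₂ ≠ 0 := hd.ne'
    refine ⟨β * (d₁ - hth) / (d₁ - d₂), div_nonneg (by nlinarith) hd.le, ?_, ?_⟩
    · rw [div_le_iff₀ hd]; nlinarith
    · field_simp; ring
  · exact ⟨β, hβ.le, le_refl β, by ring⟩

/-- Incremental exponential stability of the switched transcriptional module.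
The state is `z = (x_t, y)`; the norm on `ℝ × ℝ` is the sup norm
`‖(a, b)‖ = max (|a|, |b|)`.  Any two Caratheodory solutions that remain in
the convex region `D = {(x_t, y) : y ≤ e_T ∧ y ≤ x_t}` approach each other
exponentially with rate `c = min u_min k₁`. -/
theorem transcriptional_module_incremental_stability
    (k₁ k₂ δ β hth eT Xtot : ℝ)
    (hk₁ : 0 < k₁) (hk₂ : 0 < k₂) (hδ : 0 < δ) (hβ : 0 < β)
    (hhth : 0 < hth) (heT : 0 < eT) (hXtot : 0 < Xtot)
    (u : ℝ → ℝ) (hu_cont : Continuous u)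
    (umin : ℝ) (humin : 0 < umin) (hu : ∀ t, umin ≤ u t)
    (t₀ : ℝ) (z₁ z₂ : ℝ → ℝ × ℝ)
    (hz₁ : IsCaratheodorySol
      (fun t z =>
        (u t * (Xtot - z.1) - δ * z.1 + δ * z.2 +
            (if z.1 - z.2 ≤ hth then 0 else -β * (z.1 - z.2 - hth)),
          -k₁ * z.2 + k₂ * (eT - z.2) * (z.1 - z.2)))
      t₀ z₁)
    (hz₂ : IsCaratheodorySol
      (fun t z =>
        (u t * (Xtot - z.1) - δ * z.1 + δ * z.2 +
            (if z.1 - z.2 ≤ hth then 0 else -β * (z.1 - z.2 - hth)),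
          -k₁ * z.2 + k₂ * (eT - z.2) * (z.1 - z.2)))
      t₀ z₂)
    (t : ℝ) (ht : t₀ ≤ t)
    (hD₁ : ∀ s ∈ Set.Icc t₀ t, (z₁ s).2 ≤ eT ∧ (z₁ s).2 ≤ (z₁ s).1)
    (hD₂ : ∀ s ∈ Set.Icc t₀ t, (z₂ s).2 ≤ eT ∧ (z₂ s).2 ≤ (z₂ s).1) :
    ‖z₁ t - z₂ t‖ ≤ Real.exp (-(min umin k₁) * (t - t₀)) * ‖z₁ t₀ - z₂ t₀‖ := by
  set c := min umin k₁ with hcdef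
  have hc0 : 0 < c := lt_min humin hk₁
  set g : ℝ → ℝ × ℝ → ℝ × ℝ := fun t z =>
    (u t * (Xtot - z.1) - δ * z.1 + δ * z.2 +
        (if z.1 - z.2 ≤ hth then 0 else -β * (z.1 - z.2 - hth)),
      -k₁ * z.2 + k₂ * (eT - z.2) * (z.1 - z.2)) with hgdef
  have hz₁' : IsCaratheodorySol g t₀ z₁ := hz₁
  have hz₂' : IsCaratheodorySol g t₀ z₂ := hz₂
  -- continuity of the switching nonlinearity
  have hψc : Continuous fun d : ℝ => if d ≤ hth then (0 : ℝ) else -β * (d - hth) := by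
    have hψeq : (fun d : ℝ => if d ≤ hth then (0 : ℝ) else -β * (d - hth))
        = fun d => -β * max (d - hth) 0 := by
      funext d
      split_ifs with h
      · rw [max_eq_right (by linarith)]; ring
      · push_neg at h
        rw [max_eq_left (by linarith)]
    rw [hψeq]
    exact continuous_const.mul ((continuous_id.sub continuous_const).max continuous_const)
  have hgc : ∀ zf : ℝ → ℝ × ℝ, ContinuousOn zf (Set.Icc t₀ t) →
      ContinuousOn (fun τ => g τ (zf τ)) (Set.Icc t₀ t) := by
    intro zf hzf
    have h1 : ContinuousOn (fun τ => (zf τ).1) (Set.Icc t₀ t) :=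
      continuous_fst.comp_continuousOn hzf
    have h2 : ContinuousOn (fun τ => (zf τ).2) (Set.Icc t₀ t) :=
      continuous_snd.comp_continuousOn hzf
    simp only [hgdef]
    apply ContinuousOn.prodMk
    · refine ContinuousOn.add (ContinuousOn.add ?_ ?_) ?_
      · exact (hu_cont.continuousOn.mul (continuousOn_const.sub h1)).sub
          (continuousOn_const.mul h1)
      · exact continuousOn_const.mul h2
      · exact hψc.comp_continuousOn (h1.sub h2)
    · exact (continuousOn_const.mul h2).add
        ((continuousOn_const.mul (continuousOn_const.sub h2)).mul (h1.sub h2))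
  have hz₁c : ContinuousOn z₁ (Set.Icc t₀ t) := hz₁'.1.mono Set.Icc_subset_Ici_self
  have hz₂c : ContinuousOn z₂ (Set.Icc t₀ t) := hz₂'.1.mono Set.Icc_subset_Ici_self
  have hG₁c := hgc z₁ hz₁c
  have hG₂c := hgc z₂ hz₂c
  -- each solution is differentiable within the interval, with derivative the vector field
  have hderiv : ∀ zf : ℝ → ℝ × ℝ, IsCaratheodorySol g t₀ zf →
      ContinuousOn (fun τ => g τ (zf τ)) (Set.Icc t₀ t) →
      ∀ x ∈ Set.Icc t₀ t, HasDerivWithinAt zf (g x (zf x)) (Set.Icc t₀ t) x := by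
    intro zf hzf hc x hx
    haveI : Fact (x ∈ Set.Icc t₀ t) := ⟨hx⟩
    have hint : IntervalIntegrable (fun τ => g τ (zf τ)) volume t₀ x := by
      apply ContinuousOn.intervalIntegrable
      refine hc.mono ?_
      rw [Set.uIcc_of_le hx.1]
      exact Set.Icc_subset_Icc_right hx.2
    have hmeas := hc.stronglyMeasurableAtFilter_nhdsWithin (μ := volume) measurableSet_Icc x
    have hcw : ContinuousWithinAt (fun τ => g τ (zf τ)) (Set.Icc t₀ t) x := hc x hx
    have hD : HasDerivWithinAt (fun v => ∫ τ in t₀..v, g τ (zf τ)) (g x (zf x))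
        (Set.Icc t₀ t) x :=
      intervalIntegral.integral_hasDerivWithinAt_right hint hmeas hcw
    exact (hD.const_add (zf t₀)).congr (fun s hs => (hzf.2 s hs.1).2) ((hzf.2 x hx.1).2)
  set w : ℝ → ℝ × ℝ := fun s => z₁ s - z₂ s with hwdef
  set f : ℝ → ℝ := fun s => ‖w s‖ with hfdef
  -- matrix-measure coefficients at each point
  have hcoef : ∀ x ∈ Set.Icc t₀ t, ∃ a₁ b₁ a₂ b₂ : ℝ,
      (g x (z₁ x) - g x (z₂ x)).1 = a₁ * (w x).1 + b₁ * (w x).2 ∧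
      (g x (z₁ x) - g x (z₂ x)).2 = a₂ * (w x).2 + b₂ * (w x).1 ∧
      0 ≤ b₁ ∧ 0 ≤ b₂ ∧ a₁ + b₁ ≤ -c ∧ a₂ + b₂ ≤ -c := by
    intro x hx
    obtain ⟨hy₁eT, hy₁x⟩ := hD₁ x hx
    obtain ⟨hy₂eT, hy₂x⟩ := hD₂ x hx
    obtain ⟨κ, hκ0, hκβ, hκeq⟩ :=
      sector_bound β hth hβ ((z₁ x).1 - (z₁ x).2) ((z₂ x).1 - (z₂ x).2)
    refine ⟨-(u x + δ + κ), δ + κ,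
      -k₁ - k₂ * (eT - (z₁ x).2) - k₂ * ((z₂ x).1 - (z₂ x).2), k₂ * (eT - (z₁ x).2),
      ?_, ?_, by linarith, mul_nonneg hk₂.le (by linarith), ?_, ?_⟩
    · simp only [hgdef, hwdef, Prod.fst_sub, Prod.snd_sub]
      linear_combination hκeq
    · simp only [hgdef, hwdef, Prod.fst_sub, Prod.snd_sub]
      ring
    · have h1 := hu x
      have h2 : c ≤ umin := min_le_left _ _
      linarith
    · have h1 : 0 ≤ k₂ * ((z₂ x).1 - (z₂ x).2) := mul_nonneg hk₂.le (by linarith)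
      have h2 : c ≤ k₁ := min_le_right _ _
      linarith
  -- right Dini slope estimate for f = ‖w‖
  have hslope : ∀ x ∈ Set.Ico t₀ t, ∀ r, -c * f x < r →
      ∃ᶠ z in nhdsWithin x (Set.Ioi x), (z - x)⁻¹ * (f z - f x) < r := by
    intro x hx r hr
    have hxI : x ∈ Set.Icc t₀ t := ⟨hx.1, hx.2.le⟩
    obtain ⟨a₁, b₁, a₂, b₂, he₁, he₂, hb₁, hb₂, hab₁, hab₂⟩ := hcoef x hxI
    set G := g x (z₁ x) - g x (z₂ x) with hGdef
    have hw' : HasDerivWithinAt w G (Set.Icc t₀ t) x :=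
      (hderiv z₁ hz₁' hG₁c x hxI).sub (hderiv z₂ hz₂' hG₂c x hxI)
    set ε := (r + c * f x) / 2 with hεdef
    have hε0 : 0 < ε := by rw [hεdef]; linarith
    have hlo : ∀ᶠ z in nhdsWithin x (Set.Icc t₀ t),
        ‖w z - w x - (z - x) • G‖ ≤ ε * ‖z - x‖ :=
      (hasDerivWithinAt_iff_isLittleO.mp hw').def hε0
    set l := nhdsWithin x (Set.Ioo x t) with hldef
    haveI hlne : l.NeBot := left_nhdsWithin_Ioo_neBot hx.2
    have hl1 : l ≤ nhdsWithin x (Set.Icc t₀ t) :=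
      nhdsWithin_mono x (fun z hz => ⟨le_trans hx.1 hz.1.le, hz.2.le⟩)
    have hl2 : l ≤ nhdsWithin x (Set.Ioi x) := nhdsWithin_mono x Set.Ioo_subset_Ioi_self
    have hbig : (0 : ℝ) < 1 + |a₁| + |a₂| := by positivity
    set h₀ := (1 + |a₁| + |a₂|)⁻¹ with hh₀def
    have hh₀0 : 0 < h₀ := by positivity
    have hprod : h₀ * (1 + |a₁| + |a₂|) = 1 := inv_mul_cancel₀ hbig.ne'
    have hsmall : ∀ᶠ z in l, z < x + h₀ :=
      (eventually_lt_nhds (by linarith)).filter_mono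
        (hl1.trans nhdsWithin_le_nhds)
    have hmem : ∀ᶠ z in l, z ∈ Set.Ioo x t := eventually_mem_nhdsWithin
    have hloc := hlo.filter_mono hl1
    have key : ∀ᶠ z in l, (z - x)⁻¹ * (f z - f x) < r := by
      filter_upwards [hmem, hsmall, hloc] with z hz hz1 hz2
      have hh0 : 0 < z - x := sub_pos.mpr hz.1
      have h2 : z - x ≤ h₀ := by linarith
      have hbound : ∀ a : ℝ, |a| ≤ |a₁| + |a₂| → (z - x) * (-a) ≤ 1 := by
        intro a ha
        rcases le_or_gt (-a) 0 with hn | hn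
        · exact (mul_nonpos_of_nonneg_of_nonpos hh0.le hn).trans zero_le_one
        · have hna : -a ≤ 1 + |a₁| + |a₂| := by
            have h3 := neg_le_abs a
            linarith
          have h4 := mul_le_mul h2 hna hn.le hh₀0.le
          rw [hprod] at h4
          exact h4
      have hha₁ := hbound a₁ (by linarith [abs_nonneg a₂])
      have hha₂ := hbound a₂ (by linarith [abs_nonneg a₁])
      have hkey1 : |(w x).1 + (z - x) * G.1| ≤ (1 - c * (z - x)) * max |(w x).1| |(w x).2| :=
        abs_comp_bound _ _ _ _ _ _ _ he₁ hb₁ hab₁ hh0.le hha₁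
      have hkey2 : |(w x).2 + (z - x) * G.2| ≤ (1 - c * (z - x)) * max |(w x).1| |(w x).2| := by
        have := abs_comp_bound ((w x).2) ((w x).1) G.2 a₂ b₂ c (z - x) he₂ hb₂ hab₂ hh0.le hha₂
        rwa [max_comm] at this
      have hfx : f x = max |(w x).1| |(w x).2| := by
        rw [hfdef]; simp [Prod.norm_def, Real.norm_eq_abs]
      have hnormz : ‖z - x‖ = z - x := by
        rw [Real.norm_eq_abs, abs_of_pos hh0]
      have hstep : ‖w x + (z - x) • G‖ ≤ (1 - c * (z - x)) * f x := by
        rw [Prod.norm_def]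
        simp only [Prod.fst_add, Prod.snd_add, Prod.smul_fst, Prod.smul_snd, smul_eq_mul,
          Real.norm_eq_abs]
        rw [hfx]
        exact max_le hkey1 hkey2
      have hfz : f z ≤ (1 - c * (z - x)) * f x + ε * (z - x) := by
        calc f z = ‖(w x + (z - x) • G) + (w z - w x - (z - x) • G)‖ := by
              show ‖w z‖ = _
              congr 1
              abel
          _ ≤ ‖w x + (z - x) • G‖ + ‖w z - w x - (z - x) • G‖ := norm_add_le _ _
          _ ≤ (1 - c * (z - x)) * f x + ε * (z - x) := by
              rw [hnormz] at hz2; linarith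
      have hfz' : f z - f x ≤ (z - x) * (ε - c * f x) := by nlinarith
      have hsl : (z - x)⁻¹ * (f z - f x) ≤ ε - c * f x := by
        calc (z - x)⁻¹ * (f z - f x) ≤ (z - x)⁻¹ * ((z - x) * (ε - c * f x)) :=
              mul_le_mul_of_nonneg_left hfz' (inv_nonneg.mpr hh0.le)
          _ = ε - c * f x := by field_simp
      have hfin : ε - c * f x < r := by rw [hεdef]; linarith
      linarith
    exact key.frequently.filter_mono hl2
  have hcont : ContinuousOn f (Set.Icc t₀ t) := (hz₁c.sub hz₂c).norm
  have hG := le_gronwallBound_of_liminf_deriv_right_le (f' := fun x => -c * f x)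
    (δ := f t₀) (K := -c) (ε := 0) hcont hslope (le_refl _)
    (fun x _ => by simp) t (Set.right_mem_Icc.mpr ht)
  rw [gronwallBound_ε0] at hG
  have heq : ‖z₁ t - z₂ t‖ = f t := rfl
  rw [heq, mul_comm]
  exact hG
end
end
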